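/- arXiv:1109.0476 — 3 statements merged into one kernel-verified Lean document; each statement's English description precedes it below -/
import Mathlib

section
/- Let k be an algebraically closed field of characteristic zero and r ≥ 3 an integer. Let S ⊂ ℙ^r(k) be a set of r+2 points in linearly general position. Then the set of rational normal curves in ℙ^r(k) containing S is infinite. -/
open Projectivization

/-- The standard rational normal curve in `ℙ^r(k)`: the set of points represented by
vectors `(a^r, a^(r-1)b, …, b^r)` for `(a,b) ∈ k² \ {0}` (equivalently, for `a, b` such
that this vector is nonzero). -/
def stdRNC (k : Type*) [Field k] (r : ℕ) :
    Set (Projectivization k (Fin (r + 1) → k)) :=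
  {P | ∃ (a b : k)
      (h : (fun j : Fin (r + 1) => a ^ (r - (j : ℕ)) * b ^ (j : ℕ)) ≠ 0),
      P = Projectivization.mk k _ h}

/-- A rational normal curve in `ℙ^r(k)` is the image of the standard rational normal
curve under the projectivization of an invertible linear map of `k^(r+1)`. -/
def IsRNC (k : Type*) [Field k] (r : ℕ)
    (D : Set (Projectivization k (Fin (r + 1) → k))) : Prop :=
  ∃ g : (Fin (r + 1) → k) ≃ₗ[k] (Fin (r + 1) → k),
    D = Projectivization.map (g : (Fin (r + 1) → k) →ₗ[k] (Fin (r + 1) → k))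
      g.injective '' stdRNC k r

/-- A set of points of `ℙ^r(k)` is in linearly general position if any at most `r+1`
of them have linearly independent representative vectors in `k^(r+1)`. -/
def InLinGenPos (k : Type*) [Field k] (r : ℕ)
    (S : Set (Projectivization k (Fin (r + 1) → k))) : Prop :=
  ∀ T : Finset (Projectivization k (Fin (r + 1) → k)), ↑T ⊆ S → T.card ≤ r + 1 →
    LinearIndependent k (fun P : T => Projectivization.rep P.1)

section RNCaux

open Polynomial

variable {k : Type*} [Field k] {r : ℕ}

/-- The monomial vector `(a^r, a^(r-1)b, …, b^r)`. -/
def monVec (r : ℕ) (a b : k) : Fin (r + 1) → k :=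
  fun j : Fin (r + 1) => a ^ (r - (j : ℕ)) * b ^ (j : ℕ)

lemma monVec_mem_stdRNC (a b : k) (h : monVec r a b ≠ 0) :
    Projectivization.mk k (monVec r a b) h ∈ stdRNC k r :=
  ⟨a, b, h, rfl⟩

lemma monVec_one_ne_zero (b : k) : monVec r 1 b ≠ 0 := by
  intro h
  have := congrFun h 0
  simp [monVec] at this

lemma monVec_zero_one_ne_zero : monVec r (0 : k) 1 ≠ 0 := by
  intro h
  have := congrFun h (Fin.last r)
  simp [monVec, Fin.val_last] at this

/-- The `i`-th Lagrange-type polynomial `∏_{j ≠ i} (X - lam j)`. -/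
noncomputable def rncPoly (lam : Fin (r+1) → k) (i : Fin (r+1)) : Polynomial k :=
  ∏ j ∈ Finset.univ.erase i, (X - C (lam j))

lemma rncPoly_monic (lam : Fin (r+1) → k) (i : Fin (r+1)) : (rncPoly lam i).Monic :=
  monic_prod_of_monic _ _ fun _ _ => monic_X_sub_C _

lemma rncPoly_natDegree (lam : Fin (r+1) → k) (i : Fin (r+1)) :
    (rncPoly lam i).natDegree = r := by
  rw [rncPoly, natDegree_prod_of_monic _ _ fun j _ => monic_X_sub_C _]
  simp [Finset.card_erase_of_mem]

lemma rncPoly_coeff_top (lam : Fin (r+1) → k) (i : Fin (r+1)) :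
    (rncPoly lam i).coeff r = 1 := by
  have h := (rncPoly_monic lam i).coeff_natDegree
  rwa [rncPoly_natDegree] at h

/-- Key evaluation: the homogeneous evaluation of `rncPoly` coefficients
against the monomial vector gives the homogenized product. -/
lemma rncPoly_eval_hom (lam : Fin (r+1) → k) (i : Fin (r+1)) (a b : k) :
    (∑ m : Fin (r+1), (rncPoly lam i).coeff m * (a ^ (r - (m:ℕ)) * b ^ (m:ℕ)))
      = ∏ j ∈ Finset.univ.erase i, (b - lam j * a) := by
  rcases eq_or_ne a 0 with rfl | ha
  · rw [Finset.sum_eq_single (Fin.last r)]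
    · simp [Fin.val_last, rncPoly_coeff_top, Finset.prod_const, Finset.card_erase_of_mem]
    · intro m _ hm
      have hmlt : (m : ℕ) < r := by
        have := m.isLt
        rcases Nat.lt_or_ge (m : ℕ) r with h | h
        · exact h
        · have hval : (m : ℕ) = r := by omega
          exact absurd (Fin.ext (by simp [Fin.val_last, hval])) hm
      rw [zero_pow (Nat.sub_ne_zero_of_lt hmlt)]
      ring
    · intro h; exact absurd (Finset.mem_univ _) h
  · have key : ∀ m : Fin (r+1), a ^ (r - (m:ℕ)) * b ^ (m:ℕ) = a ^ r * (b / a) ^ (m:ℕ) := by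
      intro m
      have har : a ^ r = a ^ (r - (m:ℕ)) * a ^ (m:ℕ) := by
        rw [← pow_add]; congr 1
        have := m.isLt; omega
      rw [har, div_pow, mul_assoc, mul_div_assoc']
      rw [mul_comm (a ^ (m:ℕ)) (b ^ (m:ℕ)), mul_div_assoc,
        div_self (pow_ne_zero _ ha), mul_one]
    simp_rw [key]
    have hfac : (∑ m : Fin (r+1), (rncPoly lam i).coeff m * (a ^ r * (b / a) ^ (m:ℕ)))
        = a ^ r * ∑ m : Fin (r+1), (rncPoly lam i).coeff m * (b / a) ^ (m:ℕ) := by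
      rw [Finset.mul_sum]; exact Finset.sum_congr rfl fun m _ => by ring
    rw [hfac]
    have heval : (∑ m : Fin (r+1), (rncPoly lam i).coeff m * (b / a) ^ (m:ℕ))
        = (rncPoly lam i).eval (b / a) := by
      rw [eval_eq_sum_range, rncPoly_natDegree]
      exact Fin.sum_univ_eq_sum_range (fun m => (rncPoly lam i).coeff m * (b / a) ^ m) (r+1)
    rw [heval, rncPoly, eval_prod]
    have hcard : (Finset.univ.erase i).card = r := by
      simp [Finset.card_erase_of_mem]
    have har : a ^ r = ∏ _j ∈ Finset.univ.erase i, a := by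
      rw [Finset.prod_const, hcard]
    rw [har, ← Finset.prod_mul_distrib]
    refine Finset.prod_congr rfl fun j _ => ?_
    simp only [eval_sub, eval_X, eval_C]
    field_simp

lemma rncPoly_eval_self_ne (lam : Fin (r+1) → k) (hlam : Function.Injective lam)
    (i : Fin (r+1)) : (rncPoly lam i).eval (lam i) ≠ 0 := by
  rw [rncPoly, eval_prod]
  refine Finset.prod_ne_zero_iff.mpr fun j hj => ?_
  simp only [eval_sub, eval_X, eval_C, sub_ne_zero]
  exact fun h => (Finset.mem_erase.mp hj).1 (hlam h.symm)

lemma rncPoly_eval_other (lam : Fin (r+1) → k) (i i' : Fin (r+1)) (h : i' ≠ i) :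
    (rncPoly lam i').eval (lam i) = 0 := by
  rw [rncPoly, eval_prod]
  refine Finset.prod_eq_zero (Finset.mem_erase.mpr ⟨Ne.symm h, Finset.mem_univ i⟩) ?_
  simp

lemma rncPoly_rows_li (lam : Fin (r+1) → k) (hlam : Function.Injective lam) :
    LinearIndependent k
      (fun i : Fin (r+1) => fun m : Fin (r+1) => (rncPoly lam i).coeff m) := by
  rw [Fintype.linearIndependent_iff]
  intro d hd i
  have hQ : (∑ i' : Fin (r+1), d i' • rncPoly lam i') = 0 := by
    ext m
    rw [finset_sum_coeff, coeff_zero]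
    by_cases hm : m < r + 1
    · have := congrFun hd ⟨m, hm⟩
      simpa [Finset.sum_apply, smul_eq_mul, coeff_smul] using this
    · refine Finset.sum_eq_zero fun i' _ => ?_
      rw [coeff_smul, coeff_eq_zero_of_natDegree_lt (by rw [rncPoly_natDegree]; omega),
        smul_zero]
  have h2 := congrArg (eval (lam i)) hQ
  rw [eval_finset_sum, eval_zero] at h2
  rw [Finset.sum_eq_single i (fun i' _ hne => by
      rw [eval_smul, rncPoly_eval_other lam i i' hne, smul_zero])
    (fun h => absurd (Finset.mem_univ i) h)] at h2
  rw [eval_smul, smul_eq_mul] at h2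
  exact (mul_eq_zero.mp h2).resolve_right (rncPoly_eval_self_ne lam hlam i)

noncomputable def rncMat (lam : Fin (r+1) → k) : Matrix (Fin (r+1)) (Fin (r+1)) k :=
  Matrix.of fun i m => (rncPoly lam i).coeff m

lemma rncMat_isUnit (lam : Fin (r+1) → k) (hlam : Function.Injective lam) :
    IsUnit (rncMat lam) :=
  Matrix.linearIndependent_rows_iff_isUnit.mp (rncPoly_rows_li lam hlam)

noncomputable def rncEquiv (lam : Fin (r+1) → k) (hlam : Function.Injective lam) :
    (Fin (r+1) → k) ≃ₗ[k] (Fin (r+1) → k) :=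
  (rncMat lam).toLinearEquiv' (rncMat_isUnit lam hlam).invertible

lemma rncEquiv_apply (lam : Fin (r+1) → k) (hlam : Function.Injective lam)
    (x : Fin (r+1) → k) (i : Fin (r+1)) :
    rncEquiv lam hlam x i = ∑ m : Fin (r+1), (rncPoly lam i).coeff m * x m := by
  have h : rncEquiv lam hlam x = (rncMat lam).mulVec x := rfl
  rw [h]
  rfl

lemma rncEquiv_monVec (lam : Fin (r+1) → k) (hlam : Function.Injective lam)
    (a b : k) (i : Fin (r+1)) :
    rncEquiv lam hlam (monVec r a b) i
      = ∏ j ∈ Finset.univ.erase i, (b - lam j * a) := by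
  rw [rncEquiv_apply]
  exact rncPoly_eval_hom lam i a b

end RNCaux

/-- For a set `S` of `r+2` points of `ℙ^r(k)` in linearly general position (over an
algebraically closed field of characteristic zero, `r ≥ 3`), the set of rational normal
curves containing `S` is infinite. -/
theorem statement_15 (k : Type*) [Field k] [IsAlgClosed k] [CharZero k]
    (r : ℕ) (hr : 3 ≤ r)
    (S : Finset (Projectivization k (Fin (r + 1) → k))) (hcard : S.card = r + 2)
    (hS : InLinGenPos k r ↑S) :
    {D : Set (Projectivization k (Fin (r + 1) → k)) | IsRNC k r D ∧ ↑S ⊆ D}.Infinite := by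
  classical
  have e := S.equivFinOfCardEq hcard
  set p : Fin (r+2) → Projectivization k (Fin (r+1) → k) :=
    fun i => ((e.symm i : S) : Projectivization k (Fin (r+1) → k)) with hp
  have hpS : ∀ i, p i ∈ S := fun i => (e.symm i).2
  have hpinj : Function.Injective p := fun i j hij =>
    e.symm.injective (Subtype.ext hij)
  -- any r+1 of the points have independent representatives
  have hS' : ∀ f : Fin (r+1) → Projectivization k (Fin (r+1) → k),
      Function.Injective f → (∀ i, f i ∈ S) →
      LinearIndependent k (fun i => (f i).rep) := by
    intro f hfinj hfS
    set T : Finset (Projectivization k (Fin (r+1) → k)) :=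
      Finset.image f Finset.univ with hT
    have hTcard : T.card ≤ r + 1 := by
      rw [hT, Finset.card_image_of_injective _ hfinj, Finset.card_univ, Fintype.card_fin]
    have hTsub : ↑T ⊆ (↑S : Set (Projectivization k (Fin (r+1) → k))) := by
      intro x hx
      simp only [hT, Finset.coe_image, Set.mem_image] at hx
      obtain ⟨i, _, rfl⟩ := hx
      exact hfS i
    have hli := hS T hTsub hTcard
    exact hli.comp
      (fun i : Fin (r+1) => (⟨f i, Finset.mem_image_of_mem f (Finset.mem_univ i)⟩ : T))
      (fun i j hij => hfinj (congrArg Subtype.val hij))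
  set v : Fin (r+1) → (Fin (r+1) → k) := fun i => (p i.castSucc).rep with hv
  have hvli : LinearIndependent k v :=
    hS' _ (hpinj.comp (Fin.castSucc_injective _)) (fun i => hpS _)
  have hfr : Fintype.card (Fin (r+1)) = Module.finrank k (Fin (r+1) → k) := by
    simp [Module.finrank_fin_fun]
  set B := basisOfLinearIndependentOfCardEqFinrank hvli hfr with hB
  have hBv : ∀ i, B i = v i := fun i =>
    congrFun (coe_basisOfLinearIndependentOfCardEqFinrank hvli hfr) i
  set vl : Fin (r+1) → k := (p (Fin.last (r+1))).rep with hvl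
  set c : Fin (r+1) → k := fun i => B.repr vl i with hcdef
  have hsum : vl = ∑ j, c j • v j := by
    conv_lhs => rw [← B.sum_repr vl]
    exact Finset.sum_congr rfl fun j _ => by rw [hBv]
  -- all coordinates of the last point are nonzero
  have hc : ∀ i, c i ≠ 0 := by
    intro i hci
    set f : Fin (r+1) → Projectivization k (Fin (r+1) → k) :=
      fun j => if j = i then p (Fin.last (r+1)) else p j.castSucc with hf
    have hfinj : Function.Injective f := by
      intro j j' hjj
      have hjj' : (if j = i then p (Fin.last (r+1)) else p j.castSucc)
          = (if j' = i then p (Fin.last (r+1)) else p j'.castSucc) := hjj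
      by_cases h1 : j = i <;> by_cases h2 : j' = i
      · rw [h1, h2]
      · rw [if_pos h1, if_neg h2] at hjj'
        exact absurd (hpinj hjj').symm (Fin.castSucc_lt_last j').ne
      · rw [if_neg h1, if_pos h2] at hjj'
        exact absurd (hpinj hjj') (Fin.castSucc_lt_last j).ne
      · rw [if_neg h1, if_neg h2] at hjj'
        exact Fin.castSucc_injective _ (hpinj hjj')
    have hfS : ∀ j, f j ∈ S := by
      intro j
      show (if j = i then p (Fin.last (r+1)) else p j.castSucc) ∈ S
      split_ifs <;> exact hpS _
    have hli2 := hS' f hfinj hfS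
    have hgi : (f i).rep = vl := by
      show ((if i = i then p (Fin.last (r+1)) else p i.castSucc)).rep = vl
      rw [if_pos rfl]
    have hgj : ∀ j, j ≠ i → (f j).rep = v j := by
      intro j hj
      show ((if j = i then p (Fin.last (r+1)) else p j.castSucc)).rep = v j
      rw [if_neg hj]
    have hzero : ∑ j, (if j = i then (1:k) else -(c j)) • (f j).rep = 0 := by
      rw [← Finset.add_sum_erase _ _ (Finset.mem_univ i), if_pos rfl, one_smul, hgi]
      have hrest : ∑ j ∈ Finset.univ.erase i,
          (if j = i then (1:k) else -(c j)) • (f j).rep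
          = ∑ j ∈ Finset.univ.erase i, -(c j • v j) := by
        refine Finset.sum_congr rfl fun j hj => ?_
        rw [if_neg (Finset.mem_erase.mp hj).1, hgj j (Finset.mem_erase.mp hj).1, neg_smul]
      rw [hrest]
      have hvlsum : vl = ∑ j ∈ Finset.univ.erase i, c j • v j := by
        rw [hsum, ← Finset.add_sum_erase _ _ (Finset.mem_univ i), hci, zero_smul, zero_add]
      rw [hvlsum, ← Finset.sum_add_distrib]
      simp
    have := (Fintype.linearIndependent_iff.mp hli2)
      (fun j => if j = i then (1:k) else -(c j)) hzero i
    simp at this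
  -- the scaled basis
  set U := B.unitsSMul (fun i => Units.mk0 (c i) (hc i)) with hU
  have hUa : ∀ i, U i = c i • v i := fun i => by
    rw [hU, Module.Basis.unitsSMul_apply, hBv]; rfl
  set hE := (Pi.basisFun k (Fin (r+1))).equiv U (Equiv.refl _) with hhE
  have hEsingle : ∀ i, hE (Pi.single i 1) = c i • v i := fun i => by
    rw [← Pi.basisFun_apply, hhE, Module.Basis.equiv_apply, Equiv.refl_apply, hUa]
  have hEones : hE (fun _ => (1:k)) = vl := by
    have h1 : (fun _ => (1:k)) = ∑ j : Fin (r+1), Pi.single j (1:k) :=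
      (Finset.univ_sum_single (fun _ => (1:k))).symm
    rw [h1, map_sum, hsum]
    exact Finset.sum_congr rfl fun j _ => hEsingle j
  -- the parameters
  set Lam : ℕ → Fin (r+1) → k := fun n j => if (j:ℕ) = 2 then (n:k) else ((j:ℕ):k)
    with hLam
  have hLaminj : ∀ n : ℕ, r < n → Function.Injective (Lam n) := by
    intro n hn j j' hjj
    simp only [hLam] at hjj
    have hj := j.isLt
    have hj' := j'.isLt
    by_cases h1 : (j:ℕ) = 2 <;> by_cases h2 : (j':ℕ) = 2
    · exact Fin.ext (h1.trans h2.symm)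
    · rw [if_pos h1, if_neg h2] at hjj
      have := Nat.cast_injective (R := k) hjj
      exact absurd this (by omega)
    · rw [if_neg h1, if_pos h2] at hjj
      have := Nat.cast_injective (R := k) hjj
      exact absurd this (by omega)
    · rw [if_neg h1, if_neg h2] at hjj
      exact Fin.ext (Nat.cast_injective (R := k) hjj)
  haveI : Infinite {n : ℕ // r < n} := Set.infinite_coe_iff.mpr (Set.Ioi_infinite r)
  set G : {n : ℕ // r < n} → ((Fin (r+1) → k) ≃ₗ[k] (Fin (r+1) → k)) :=
    fun n => (rncEquiv (Lam n.1) (hLaminj n.1 n.2)).trans hE with hG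
  have hGapp : ∀ (n : {n : ℕ // r < n}) (x : Fin (r+1) → k),
      G n x = hE (rncEquiv (Lam n.1) (hLaminj n.1 n.2) x) := fun n x => rfl
  set F : {n : ℕ // r < n} → Set (Projectivization k (Fin (r+1) → k)) :=
    fun n => Projectivization.map
      ((G n : (Fin (r+1) → k) →ₗ[k] (Fin (r+1) → k))) (G n).injective '' stdRNC k r
    with hF
  -- each curve contains S
  have hmem1 : ∀ (n : {n : ℕ // r < n}) (i' : Fin (r+1)), p i'.castSucc ∈ F n := by
    intro n i'
    set lam := Lam n.1 with hlamdef
    have hlam := hLaminj n.1 n.2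
    have hm : monVec r (1:k) (lam i') ≠ 0 := monVec_one_ne_zero _
    refine ⟨Projectivization.mk k (monVec r 1 (lam i')) hm,
      monVec_mem_stdRNC _ _ hm, ?_⟩
    rw [Projectivization.map_mk]
    set w : k := ∏ j ∈ Finset.univ.erase i', (lam i' - lam j) with hw
    have hvec : rncEquiv lam hlam (monVec r 1 (lam i')) = Pi.single i' w := by
      funext i''
      rw [rncEquiv_monVec]
      rcases eq_or_ne i'' i' with rfl | hne
      · rw [Pi.single_eq_same, hw]
        exact Finset.prod_congr rfl fun j _ => by ring
      · rw [Pi.single_eq_of_ne hne]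
        refine Finset.prod_eq_zero
          (Finset.mem_erase.mpr ⟨hne.symm, Finset.mem_univ i'⟩) (by ring)
    have hsingle : Pi.single i' w = w • (Pi.single i' 1 : Fin (r+1) → k) := by
      funext j
      rcases eq_or_ne j i' with rfl | hj
      · simp
      · simp [Pi.single_eq_of_ne hj]
    have hGval : (G n : (Fin (r+1) → k) →ₗ[k] (Fin (r+1) → k)) (monVec r 1 (lam i'))
        = (w * c i') • v i' := by
      show G n (monVec r 1 (lam i')) = (w * c i') • v i'
      rw [hGapp, hvec, hsingle, map_smul, hEsingle, smul_smul]
    conv_rhs => rw [← Projectivization.mk_rep (p i'.castSucc)]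
    rw [Projectivization.mk_eq_mk_iff']
    exact ⟨w * c i', hGval.symm⟩
  have hmem2 : ∀ (n : {n : ℕ // r < n}), p (Fin.last (r+1)) ∈ F n := by
    intro n
    have hm : monVec r (0:k) 1 ≠ 0 := monVec_zero_one_ne_zero
    refine ⟨Projectivization.mk k (monVec r 0 1) hm, monVec_mem_stdRNC _ _ hm, ?_⟩
    rw [Projectivization.map_mk]
    have hvec : rncEquiv (Lam n.1) (hLaminj n.1 n.2) (monVec r 0 1) = fun _ => (1:k) := by
      funext i
      rw [rncEquiv_monVec]
      simp
    have hGval : (G n : (Fin (r+1) → k) →ₗ[k] (Fin (r+1) → k)) (monVec r 0 1) = vl := by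
      show G n (monVec r 0 1) = vl
      rw [hGapp, hvec, hEones]
    conv_rhs => rw [← Projectivization.mk_rep (p (Fin.last (r+1)))]
    rw [Projectivization.mk_eq_mk_iff']
    exact ⟨1, by rw [one_smul, hGval]⟩
  have hFmem : ∀ n, F n ∈
      {D : Set (Projectivization k (Fin (r + 1) → k)) | IsRNC k r D ∧ ↑S ⊆ D} := by
    intro n
    refine ⟨⟨G n, rfl⟩, ?_⟩
    intro x hx
    have hx' : x ∈ S := hx
    have : p (e ⟨x, hx'⟩) = x := by
      rw [hp]; simp
    rw [← this]
    rcases Fin.eq_castSucc_or_eq_last (e ⟨x, hx'⟩) with ⟨i', hi'⟩ | hi'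
    · rw [hi']; exact hmem1 n i'
    · rw [hi']; exact hmem2 n
  -- injectivity of the family
  have hFinj : Function.Injective F := by
    intro n n' hFeq
    by_contra hne'
    have hnn' : n.1 ≠ n'.1 := fun h => hne' (Subtype.ext h)
    set lam := Lam n.1 with hlamdef
    set mu := Lam n'.1 with hmudef
    have hlam := hLaminj n.1 n.2
    have hmu := hLaminj n'.1 n'.2
    set t : k := ((n.1 + n'.1 + 1 : ℕ) : k) with ht
    have htlam : ∀ j, t - lam j ≠ 0 := by
      intro j
      rw [sub_ne_zero]
      simp only [ht, hlamdef, hLam]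
      have hj := j.isLt
      have hn2 := n.2
      have hn'2 := n'.2
      split_ifs with h
      · intro hcast
        have := Nat.cast_injective (R := k) hcast
        omega
      · intro hcast
        have := Nat.cast_injective (R := k) hcast
        omega
    have hm : monVec r (1:k) t ≠ 0 := monVec_one_ne_zero _
    have hQmem : Projectivization.map
        ((G n : (Fin (r+1) → k) →ₗ[k] (Fin (r+1) → k))) (G n).injective
        (Projectivization.mk k (monVec r 1 t) hm) ∈ F n :=
      ⟨_, monVec_mem_stdRNC _ _ hm, rfl⟩
    rw [hFeq] at hQmem
    obtain ⟨x, hxstd, hxeq⟩ := hQmem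
    obtain ⟨a, b, hab, rfl⟩ := hxstd
    rw [Projectivization.map_mk, Projectivization.map_mk,
      Projectivization.mk_eq_mk_iff'] at hxeq
    obtain ⟨d, hd⟩ := hxeq
    -- hd : d • (G n (monVec 1 t)) = G n' (monVec a b)
    have habm : monVec r a b ≠ 0 := hab
    have hd2 : d • rncEquiv lam hlam (monVec r 1 t)
        = rncEquiv mu hmu (monVec r a b) := by
      apply hE.injective
      rw [map_smul]
      exact hd
    have hd' : ∀ i, d * ∏ j ∈ Finset.univ.erase i, (t - lam j)
        = ∏ j ∈ Finset.univ.erase i, (b - mu j * a) := by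
      intro i
      have := congrFun hd2 i
      rw [Pi.smul_apply, smul_eq_mul, rncEquiv_monVec, rncEquiv_monVec] at this
      rw [← this]
      congr 1
      exact Finset.prod_congr rfl fun j _ => by ring
    have hdne : d ≠ 0 := by
      intro hd0
      have hzero : rncEquiv mu hmu (monVec r a b) = 0 := by
        funext i
        rw [rncEquiv_monVec, ← hd' i, hd0, zero_mul]
        rfl
      exact habm ((rncEquiv mu hmu).map_eq_zero_iff.mp hzero)
    have hbmu : ∀ j, b - mu j * a ≠ 0 := by
      intro j hj0
      have h01 : (⟨0, by omega⟩ : Fin (r+1)) ≠ (⟨1, by omega⟩ : Fin (r+1)) := by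
        intro h; simpa using congrArg Fin.val h
      obtain ⟨i, hij⟩ : ∃ i : Fin (r+1), i ≠ j := by
        rcases eq_or_ne j ⟨0, by omega⟩ with rfl | hj
        · exact ⟨⟨1, by omega⟩, h01.symm⟩
        · exact ⟨⟨0, by omega⟩, hj.symm⟩
      have hz : ∏ j' ∈ Finset.univ.erase i, (b - mu j' * a) = 0 :=
        Finset.prod_eq_zero (Finset.mem_erase.mpr ⟨hij.symm, Finset.mem_univ j⟩) hj0
      rw [← hd' i] at hz
      rcases mul_eq_zero.mp hz with h | h
      · exact hdne h
      · obtain ⟨j', _, hj'⟩ := Finset.prod_eq_zero_iff.mp h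
        exact htlam j' hj'
    set W : k := ∏ j, (t - lam j) with hW
    set V : k := ∏ j, (b - mu j * a) with hV
    have hWne : W ≠ 0 := Finset.prod_ne_zero_iff.mpr fun j _ => htlam j
    have hVne : V ≠ 0 := Finset.prod_ne_zero_iff.mpr fun j _ => hbmu j
    have key : ∀ i, V * (t - lam i) = d * W * (b - mu i * a) := by
      intro i
      have h1 : W = (t - lam i) * ∏ j ∈ Finset.univ.erase i, (t - lam j) :=
        (Finset.mul_prod_erase _ _ (Finset.mem_univ i)).symm
      have h2 : V = (b - mu i * a) * ∏ j ∈ Finset.univ.erase i, (b - mu j * a) :=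
        (Finset.mul_prod_erase _ _ (Finset.mem_univ i)).symm
      rw [h1, h2, ← hd' i]
      ring
    have hval0 : lam ⟨0, by omega⟩ = 0 := by simp [hlamdef, hLam]
    have hval1 : lam ⟨1, by omega⟩ = 1 := by simp [hlamdef, hLam]
    have hval2 : lam ⟨2, by omega⟩ = (n.1 : k) := by simp [hlamdef, hLam]
    have hval0' : mu ⟨0, by omega⟩ = 0 := by simp [hmudef, hLam]
    have hval1' : mu ⟨1, by omega⟩ = 1 := by simp [hmudef, hLam]
    have hval2' : mu ⟨2, by omega⟩ = (n'.1 : k) := by simp [hmudef, hLam]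
    have e0 := key ⟨0, by omega⟩
    have e1 := key ⟨1, by omega⟩
    have e2 := key ⟨2, by omega⟩
    rw [hval0, hval0'] at e0
    rw [hval1, hval1'] at e1
    rw [hval2, hval2'] at e2
    have hVa : V = d * W * a := by linear_combination e0 - e1
    have hfin : V * ((n.1 : k) - (n'.1 : k)) = 0 := by
      linear_combination e0 - e2 - ((n'.1 : k)) * hVa
    rcases mul_eq_zero.mp hfin with h | h
    · exact hVne h
    · exact hnn' (Nat.cast_injective (sub_eq_zero.mp h))
  exact Set.infinite_of_injective_forall_mem hFinj hFmem
end

section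
/- Let k be an algebraically closed field of characteristic zero and r ≥ 3 an integer. Let S ⊂ ℙ^r(k) be a set of r+2 points in linearly general position, and let F ⊂ ℙ^r(k) be a finite set with F ∩ S = ∅. Then there exists a rational normal curve D ⊂ ℙ^r(k) with S ⊂ D and D ∩ F = ∅. -/
open Projectivization

namespace RNC16

open Polynomial Finset

variable {k : Type*} [Field k] {n : ℕ}

noncomputable def gp (lam : Fin (n + 1) → k) (i : Fin (n + 1)) : Polynomial k :=
  ∏ m ∈ Finset.univ.erase i, (X - C (lam m))

lemma card_erase (i : Fin (n + 1)) : (Finset.univ.erase i).card = n := by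
  rw [Finset.card_erase_of_mem (Finset.mem_univ i), Finset.card_univ, Fintype.card_fin]
  omega

lemma gp_monic (lam : Fin (n + 1) → k) (i : Fin (n + 1)) : (gp lam i).Monic :=
  monic_prod_of_monic _ _ fun m _ => monic_X_sub_C _

lemma gp_natDegree (lam : Fin (n + 1) → k) (i : Fin (n + 1)) : (gp lam i).natDegree = n := by
  rw [gp, natDegree_prod _ _ (fun m _ => X_sub_C_ne_zero _)]
  simp [card_erase i]

lemma gp_eval (lam : Fin (n + 1) → k) (i : Fin (n + 1)) (s : k) :
    (gp lam i).eval s = ∏ m ∈ Finset.univ.erase i, (s - lam m) := by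
  simp [gp, eval_prod]

lemma sum_coeff (lam : Fin (n + 1) → k) (i : Fin (n + 1)) (a b : k) :
    ∑ j : Fin (n + 1), (gp lam i).coeff (n - (j : ℕ)) * (a ^ (n - (j : ℕ)) * b ^ (j : ℕ))
      = ∏ m ∈ Finset.univ.erase i, (a - lam m * b) := by
  have h1 : (gp lam i).coeff n = 1 := by
    have := (gp_monic lam i).leadingCoeff
    rwa [Polynomial.leadingCoeff, gp_natDegree] at this
  rcases eq_or_ne b 0 with rfl | hb
  · rw [Finset.sum_eq_single (0 : Fin (n + 1))]
    · have h2 : ∏ m ∈ Finset.univ.erase i, (a - lam m * (0 : k)) = a ^ n := by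
        simp [Finset.prod_const, card_erase i]
      simp [h1, h2]
    · intro j _ hj
      have : (j : ℕ) ≠ 0 := fun h => hj (Fin.ext h)
      simp [zero_pow this]
    · simp
  · have hpt : ∀ j : Fin (n + 1), a ^ (n - (j : ℕ)) * b ^ (j : ℕ)
        = b ^ n * (a * b⁻¹) ^ (n - (j : ℕ)) := by
      intro j
      have hj : (j : ℕ) ≤ n := Nat.lt_succ_iff.mp j.isLt
      have hbn : b ^ n = b ^ (n - (j : ℕ)) * b ^ (j : ℕ) := by
        rw [← pow_add]; congr 1; omega
      rw [hbn, mul_pow, inv_pow]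
      field_simp
    calc ∑ j : Fin (n + 1), (gp lam i).coeff (n - (j : ℕ)) * (a ^ (n - (j : ℕ)) * b ^ (j : ℕ))
        = b ^ n * ∑ j : Fin (n + 1), (gp lam i).coeff (n - (j : ℕ)) * (a * b⁻¹) ^ (n - (j : ℕ)) := by
          rw [Finset.mul_sum]
          exact Finset.sum_congr rfl fun j _ => by rw [hpt j]; ring
      _ = b ^ n * ∑ j ∈ Finset.range (n + 1),
            (gp lam i).coeff (n - j) * (a * b⁻¹) ^ (n - j) := by
          rw [Fin.sum_univ_eq_sum_range (fun j => (gp lam i).coeff (n - j) * (a * b⁻¹) ^ (n - j))]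
      _ = b ^ n * (gp lam i).eval (a * b⁻¹) := by
          congr 1
          rw [eval_eq_sum_range' (n := n + 1) (by rw [gp_natDegree]; omega) (a * b⁻¹)]
          have := Finset.sum_range_reflect
            (fun j => (gp lam i).coeff j * (a * b⁻¹) ^ j) (n + 1)
          simpa using this
      _ = ∏ m ∈ Finset.univ.erase i, (b * (a * b⁻¹ - lam m)) := by
          rw [gp_eval, Finset.prod_mul_distrib, Finset.prod_const, card_erase]
      _ = ∏ m ∈ Finset.univ.erase i, (a - lam m * b) := by
          refine Finset.prod_congr rfl fun m _ => ?_
          field_simp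

noncomputable def Mat (lam : Fin (n + 1) → k) : Matrix (Fin (n + 1)) (Fin (n + 1)) k :=
  Matrix.of fun i j => (gp lam i).coeff (n - (j : ℕ))

lemma mulVec_mu (lam : Fin (n + 1) → k) (a b : k) :
    (Mat lam).mulVec (fun j : Fin (n + 1) => a ^ (n - (j : ℕ)) * b ^ (j : ℕ))
      = fun i => ∏ m ∈ Finset.univ.erase i, (a - lam m * b) := by
  funext i
  simpa [Matrix.mulVec, dotProduct, Mat] using sum_coeff lam i a b

lemma isUnit_det (lam : Fin (n + 1) → k) (hlam : Function.Injective lam) :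
    IsUnit (Mat lam).det := by
  set Vm : Matrix (Fin (n + 1)) (Fin (n + 1)) k :=
    Matrix.of fun j m => lam m ^ (n - (j : ℕ)) * (1 : k) ^ (j : ℕ) with hVm
  have hMV : Mat lam * Vm
      = Matrix.diagonal fun m => ∏ m' ∈ Finset.univ.erase m, (lam m - lam m') := by
    ext i m
    have h := congrFun (mulVec_mu lam (lam m) 1) i
    have h2 : ((Mat lam) * Vm) i m
        = ∑ j, (Mat lam) i j * (lam m ^ (n - (j : ℕ)) * (1 : k) ^ (j : ℕ)) := by
      simp [Matrix.mul_apply, hVm]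
    rw [h2]
    have h3 : ∑ j, (Mat lam) i j * (lam m ^ (n - (j : ℕ)) * (1 : k) ^ (j : ℕ))
        = ∏ m' ∈ Finset.univ.erase i, (lam m - lam m' * 1) := by
      rw [← h]; simp [Matrix.mulVec, dotProduct]
    rw [h3]
    rcases eq_or_ne i m with rfl | him
    · simp [Matrix.diagonal_apply_eq]
    · rw [Matrix.diagonal_apply_ne _ him]
      exact Finset.prod_eq_zero (Finset.mem_erase.mpr ⟨Ne.symm him, Finset.mem_univ m⟩)
        (by ring)
  have hprod : (∏ m, ∏ m' ∈ Finset.univ.erase m, (lam m - lam m')) ≠ 0 := by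
    refine Finset.prod_ne_zero_iff.mpr fun m _ => Finset.prod_ne_zero_iff.mpr fun m' hm' => ?_
    exact sub_ne_zero.mpr fun h => (Finset.mem_erase.mp hm').1 (hlam h).symm
  have hdet : (Mat lam).det * Vm.det = ∏ m, ∏ m' ∈ Finset.univ.erase m, (lam m - lam m') := by
    rw [← Matrix.det_mul, hMV, Matrix.det_diagonal]
  exact isUnit_iff_ne_zero.mpr (left_ne_zero_of_mul (hdet ▸ hprod))

end RNC16

set_option maxHeartbeats 1000000 in
/-- For a set `S` of `r+2` points of `ℙ^r(k)` in linearly general position and a finite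
set `F` disjoint from `S`, there is a rational normal curve containing `S` and avoiding
`F` (over an algebraically closed field of characteristic zero, `r ≥ 3`). -/
theorem statement_16 (k : Type*) [Field k] [IsAlgClosed k] [CharZero k]
    (r : ℕ) (hr : 3 ≤ r)
    (S : Finset (Projectivization k (Fin (r + 1) → k))) (hcard : S.card = r + 2)
    (hS : InLinGenPos k r ↑S)
    (F : Set (Projectivization k (Fin (r + 1) → k))) (hF : F.Finite)
    (hFS : F ∩ ↑S = ∅) :
    ∃ D : Set (Projectivization k (Fin (r + 1) → k)),
      IsRNC k r D ∧ ↑S ⊆ D ∧ D ∩ F = ∅ := by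
  classical
  haveI : Infinite k := Infinite.of_injective (Nat.cast : ℕ → k) Nat.cast_injective
  obtain ⟨P, hPinj, hPS, hSP⟩ :
      ∃ P : Fin (r + 2) → Projectivization k (Fin (r + 1) → k),
        Function.Injective P ∧ (∀ i, P i ∈ S) ∧
          ∀ x ∈ (S : Set (Projectivization k (Fin (r + 1) → k))), ∃ i, P i = x := by
    refine ⟨fun i => ((S.equivFinOfCardEq hcard).symm i : _), ?_, ?_, ?_⟩
    · intro i j h
      exact (S.equivFinOfCardEq hcard).symm.injective (Subtype.ext h)
    · exact fun i => ((S.equivFinOfCardEq hcard).symm i).2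
    · exact fun x hx => ⟨S.equivFinOfCardEq hcard ⟨x, hx⟩, by simp⟩
  set f : Fin (r + 2) → (Fin (r + 1) → k) := fun i => (P i).rep with hf
  have hfne : ∀ i, f i ≠ 0 := fun i => (P i).rep_nonzero
  have hmkf : ∀ i, Projectivization.mk k (f i) (hfne i) = P i := fun i => (P i).mk_rep
  have hindep : ∀ (α : Type) [Fintype α] (ι : α → Fin (r + 2)), Function.Injective ι →
      Fintype.card α ≤ r + 1 → LinearIndependent k (f ∘ ι) := by
    intro α _ ι hι hcardα
    have hmem : ∀ a : α, P (ι a) ∈ Finset.image (fun a => P (ι a)) Finset.univ :=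
      fun a => Finset.mem_image_of_mem _ (Finset.mem_univ a)
    have hTsub : ((Finset.image (fun a => P (ι a)) Finset.univ : Finset _) : Set _) ⊆ (S : Set (Projectivization k (Fin (r + 1) → k))) := by
      intro x hx
      simp only [Finset.coe_image, Set.mem_image] at hx
      obtain ⟨a, _, rfl⟩ := hx
      exact hPS _
    have hTcard : (Finset.image (fun a => P (ι a)) Finset.univ).card ≤ r + 1 :=
      le_trans Finset.card_image_le (by simpa using hcardα)
    have h := hS _ hTsub hTcard
    have h2 := h.comp (fun a : α => (⟨P (ι a), hmem a⟩ : _))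
      (fun a b hab => hι (hPinj (congrArg Subtype.val hab)))
    have heq : f ∘ ι
        = (fun Q : (Finset.image (fun a => P (ι a)) Finset.univ : Finset _) => Q.1.rep)
          ∘ (fun a : α => (⟨P (ι a), hmem a⟩ : _)) := by
      funext a; rfl
    rw [heq]
    exact h2
  have hli : LinearIndependent k (f ∘ Fin.castSucc) :=
    hindep (Fin (r + 1)) Fin.castSucc (Fin.castSucc_injective _) (by simp)
  let bV : Module.Basis (Fin (r + 1)) k (Fin (r + 1) → k) :=
    basisOfLinearIndependentOfCardEqFinrank hli (by simp)
  have hbV : ∀ m, bV m = f m.castSucc := fun m =>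
    congrFun (coe_basisOfLinearIndependentOfCardEqFinrank hli (by simp)) m
  set w : Fin (r + 1) → k := f (Fin.last (r + 1)) with hw
  set p : Fin (r + 1) → k := fun m => bV.repr w m with hp
  have hwsum : ∑ m, p m • bV m = w := bV.sum_repr w
  have hpne : ∀ i, p i ≠ 0 := by
    intro i hpi
    have hcardo : Fintype.card (Option {m : Fin (r + 1) // m ≠ i}) ≤ r + 1 := by
      simp [Fintype.card_subtype_compl, Fintype.card_subtype_eq]
    have hιinj : Function.Injective
        (fun o : Option {m : Fin (r + 1) // m ≠ i} =>
          o.elim (Fin.last (r + 1)) (fun m => Fin.castSucc m.1)) := by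
      rintro (_ | a) (_ | b) h
      · rfl
      · exact absurd h.symm (Fin.castSucc_lt_last _).ne
      · exact absurd h (Fin.castSucc_lt_last _).ne
      · exact congrArg _ (Subtype.ext (Fin.castSucc_injective _ h))
    have h := hindep _ _ hιinj hcardo
    rw [Fintype.linearIndependent_iff] at h
    have hzero := h (fun o => o.elim (-1) fun m => p m.1) ?_ none
    · have hzero' : (-1 : k) = 0 := hzero
      exact one_ne_zero (neg_eq_zero.mp hzero')
    · rw [Fintype.sum_option]
      have hsub : ∑ m : {m : Fin (r + 1) // m ≠ i}, p m.1 • f (Fin.castSucc m.1)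
          = ∑ m ∈ Finset.univ.erase i, p m • bV m := by
        rw [Finset.sum_subtype (p := fun m => m ≠ i) (Finset.univ.erase i)
          (by intro x; simp) (fun m => p m • bV m)]
        exact Finset.sum_congr rfl fun m _ => by rw [hbV]
      have herase : ∑ m ∈ Finset.univ.erase i, p m • bV m = w := by
        rw [Finset.sum_erase _ (by rw [hpi, zero_smul])]
        exact hwsum
      show (-1 : k) • w + ∑ m : {m : Fin (r + 1) // m ≠ i}, p m.1 • f (Fin.castSucc m.1) = 0
      rw [hsub, herase]
      simp
  let B : Module.Basis (Fin (r + 1)) k (Fin (r + 1) → k) :=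
    bV.unitsSMul fun m => Units.mk0 (p m) (hpne m)
  have hB : ∀ m, B m = p m • bV m := fun m => by
    rw [Module.Basis.unitsSMul_apply]; rfl
  have hBw : ∑ m, B m = w := by
    rw [Finset.sum_congr rfl fun m (_ : m ∈ Finset.univ) => hB m]; exact hwsum
  have h0r : (0 : ℕ) < r + 1 := by omega
  have h1r : (1 : ℕ) < r + 1 := by omega
  have h2r : (2 : ℕ) < r + 1 := by omega
  set i0 : Fin (r + 1) := ⟨0, h0r⟩ with hi0
  set i1 : Fin (r + 1) := ⟨1, h1r⟩ with hi1
  set i2 : Fin (r + 1) := ⟨2, h2r⟩ with hi2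
  set uq : Projectivization k (Fin (r + 1) → k) → Fin (r + 1) → k :=
    fun q => B.equivFun q.rep with huq
  set sq : Projectivization k (Fin (r + 1) → k) → k :=
    fun q => (uq q i1 - 2 * uq q i2) / (uq q i1 - uq q i2) with hsq
  set tq : Projectivization k (Fin (r + 1) → k) → k :=
    fun q => sq q - (sq q - 1) * uq q i1 / uq q i0 with htqdef
  have hbad : (tq '' F ∪ Set.range fun m : Fin (r + 1) => ((m : ℕ) : k)).Finite :=
    (hF.image tq).union (Set.finite_range _)
  obtain ⟨t, ht⟩ := hbad.infinite_compl.nonempty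
  have htq : t ∉ tq '' F := fun hmem => ht (Set.mem_union_left _ hmem)
  have htc : ∀ m : Fin (r + 1), t ≠ ((m : ℕ) : k) :=
    fun m hmem => ht (Set.mem_union_right _ ⟨m, hmem.symm⟩)
  set lam : Fin (r + 1) → k := fun m => if m = i0 then t else ((m : ℕ) : k) with hlam
  have hlaminj : Function.Injective lam := by
    intro m m' h
    by_cases hm1 : m = i0 <;> by_cases hm2 : m' = i0
    · rw [hm1, hm2]
    · rw [hlam] at h; simp only [if_pos hm1, if_neg hm2] at h
      exact absurd h (htc m')
    · rw [hlam] at h; simp only [if_neg hm1, if_pos hm2] at h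
      exact absurd h.symm (htc m)
    · rw [hlam] at h; simp only [if_neg hm1, if_neg hm2] at h
      exact Fin.ext (Nat.cast_injective h)
  have hlam0 : lam i0 = t := by rw [hlam]; simp
  have hlam1 : lam i1 = 1 := by
    rw [hlam]; simp only [hi1, hi0]
    rw [if_neg (by simp [Fin.ext_iff])]
    norm_num
  have hlam2 : lam i2 = 2 := by
    rw [hlam]; simp only [hi2, hi0]
    rw [if_neg (by simp [Fin.ext_iff])]
    norm_num
  have hMinv : Invertible (RNC16.Mat lam) :=
    (RNC16.Mat lam).invertibleOfIsUnitDet (RNC16.isUnit_det lam hlaminj)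
  set G : (Fin (r + 1) → k) ≃ₗ[k] (Fin (r + 1) → k) :=
    ((RNC16.Mat lam).toLinearEquiv' hMinv).trans B.equivFun.symm with hGdef0
  have hGdef : ∀ x, G x = B.equivFun.symm ((RNC16.Mat lam).mulVec x) := by
    intro x
    have h1 : G x = B.equivFun.symm (Matrix.toLin' (RNC16.Mat lam) x) := rfl
    rw [h1, Matrix.toLin'_apply]
  have hGB : ∀ a b : k,
      B.equivFun (G fun j : Fin (r + 1) => a ^ (r - (j : ℕ)) * b ^ (j : ℕ))
        = fun i => ∏ m ∈ Finset.univ.erase i, (a - lam m * b) := by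
    intro a b
    rw [hGdef, LinearEquiv.apply_symm_apply, RNC16.mulVec_mu]
  refine ⟨_, ⟨G, rfl⟩, ?_, ?_⟩
  · -- S ⊆ D
    intro x hx
    obtain ⟨i, rfl⟩ := hSP x hx
    clear hx
    induction i using Fin.lastCases with
    | last =>
      have h2 : (fun j : Fin (r + 1) => (1 : k) ^ (r - (j : ℕ)) * (0 : k) ^ (j : ℕ)) ≠ 0 := by
        intro h0
        have := congrFun h0 i0
        rw [hi0] at this
        simp at this
      refine ⟨Projectivization.mk k _ h2, ⟨1, 0, h2, rfl⟩, ?_⟩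
      rw [Projectivization.map_mk]
      simp only [LinearEquiv.coe_coe]
      rw [← hmkf (Fin.last (r + 1)), Projectivization.mk_eq_mk_iff']
      refine ⟨1, ?_⟩
      have hcoord := hGB 1 0
      have h3 : (fun i => ∏ m ∈ Finset.univ.erase i, ((1 : k) - lam m * 0))
          = fun _ : Fin (r + 1) => (1 : k) := by
        funext i; simp
      rw [h3] at hcoord
      have h4 : G (fun j : Fin (r + 1) => (1 : k) ^ (r - (j : ℕ)) * (0 : k) ^ (j : ℕ))
          = B.equivFun.symm (fun _ => (1 : k)) := by
        conv_lhs => rw [← LinearEquiv.symm_apply_apply B.equivFun (G _)]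
        rw [hcoord]
      rw [one_smul, h4, Module.Basis.equivFun_symm_apply]
      simp only [one_smul]
      exact hBw.symm
    | cast m =>
      have h1m : (fun j : Fin (r + 1) => lam m ^ (r - (j : ℕ)) * (1 : k) ^ (j : ℕ)) ≠ 0 := by
        intro h0
        have := congrFun h0 (Fin.last r)
        simp at this
      refine ⟨Projectivization.mk k _ h1m, ⟨lam m, 1, h1m, rfl⟩, ?_⟩
      rw [Projectivization.map_mk]
      simp only [LinearEquiv.coe_coe]
      rw [← hmkf m.castSucc, Projectivization.mk_eq_mk_iff']
      refine ⟨(∏ m' ∈ Finset.univ.erase m, (lam m - lam m' * 1)) * p m, ?_⟩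
      have hcoord := hGB (lam m) 1
      have h4 : G (fun j : Fin (r + 1) => lam m ^ (r - (j : ℕ)) * (1 : k) ^ (j : ℕ))
          = B.equivFun.symm (fun i => ∏ m' ∈ Finset.univ.erase i, (lam m - lam m' * 1)) := by
        conv_lhs => rw [← LinearEquiv.symm_apply_apply B.equivFun (G _)]
        rw [hcoord]
      rw [h4, Module.Basis.equivFun_symm_apply,
        Finset.sum_eq_single m
          (fun i _ him => by
            rw [Finset.prod_eq_zero
              (Finset.mem_erase.mpr ⟨Ne.symm him, Finset.mem_univ m⟩)
              (by rw [mul_one, sub_self]), zero_smul])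
          (fun hm => absurd (Finset.mem_univ m) hm),
        hB m, hbV m, smul_smul]
  · -- D ∩ F = ∅
    rw [Set.eq_empty_iff_forall_notMem]
    rintro q ⟨hqD, hqF⟩
    obtain ⟨x, hxstd, hxq⟩ := hqD
    obtain ⟨a, b, hab, rfl⟩ := hxstd
    rw [Projectivization.map_mk] at hxq
    simp only [LinearEquiv.coe_coe] at hxq
    have hqS : q ∉ (S : Set (Projectivization k (Fin (r + 1) → k))) := fun hqS' =>
      Set.eq_empty_iff_forall_notMem.mp hFS q ⟨hqF, hqS'⟩
    obtain ⟨c, hc⟩ := (Projectivization.mk_eq_mk_iff k _ _ _ q.rep_nonzero).mp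
      (hxq.trans (Projectivization.mk_rep q).symm)
    rw [Units.smul_def] at hc
    set u : Fin (r + 1) → k := B.equivFun q.rep with hu
    have hqrep : q.rep = B.equivFun.symm u := (B.equivFun.symm_apply_apply q.rep).symm
    have hcu : ∀ i, ∏ m' ∈ Finset.univ.erase i, (a - lam m' * b) = (c : k) * u i := by
      intro i
      have h5 := congrArg B.equivFun hc
      rw [map_smul, hGB a b] at h5
      have h6 := congrFun h5.symm i
      rw [hu]; simpa using h6
    rcases eq_or_ne b 0 with rfl | hb
    · have ha : a ≠ 0 := by
        intro h0; apply hab; funext j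
        rcases Nat.eq_zero_or_pos (j : ℕ) with hj | hj
        · have h9 : r - (j : ℕ) ≠ 0 := by omega
          simp [h0, zero_pow h9]
        · have h9 : (j : ℕ) ≠ 0 := by omega
          simp [zero_pow h9]
      have hconst : ∀ i, (c : k) * u i = a ^ r := by
        intro i
        rw [← hcu i,
          Finset.prod_congr rfl (fun m' (_ : m' ∈ Finset.univ.erase i) =>
            (by ring : a - lam m' * 0 = a)),
          Finset.prod_const, RNC16.card_erase]
      apply hqS
      have husolve : u = fun _ => (c : k)⁻¹ * a ^ r := by
        funext i
        have h7 := hconst i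
        field_simp
        linear_combination h7
      have hurep : q.rep = ((c : k)⁻¹ * a ^ r) • w := by
        rw [hqrep, husolve, Module.Basis.equivFun_symm_apply, ← Finset.smul_sum, hBw]
      have hql : q = P (Fin.last (r + 1)) := by
        rw [← Projectivization.mk_rep q, ← hmkf (Fin.last (r + 1))]
        exact (Projectivization.mk_eq_mk_iff' k _ _ _ _).mpr
          ⟨(c : k)⁻¹ * a ^ r, hurep.symm⟩
      rw [hql]
      exact hPS _
    · set sv : k := a * b⁻¹ with hsv
      have hfac : ∀ i, ∏ m' ∈ Finset.univ.erase i, (a - lam m' * b)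
          = b ^ r * ∏ m' ∈ Finset.univ.erase i, (sv - lam m') := by
        intro i
        calc ∏ m' ∈ Finset.univ.erase i, (a - lam m' * b)
            = ∏ m' ∈ Finset.univ.erase i, (b * (sv - lam m')) :=
              Finset.prod_congr rfl fun m' _ => by rw [hsv, mul_sub, mul_comm b (a * b⁻¹), mul_assoc, inv_mul_cancel₀ hb, mul_one, mul_comm b]
          _ = b ^ r * ∏ m' ∈ Finset.univ.erase i, (sv - lam m') := by
              rw [Finset.prod_mul_distrib, Finset.prod_const, RNC16.card_erase]
      have hcu2 : ∀ i, b ^ r * ∏ m' ∈ Finset.univ.erase i, (sv - lam m') = (c : k) * u i :=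
        fun i => by rw [← hfac i]; exact hcu i
      by_cases hsm : ∃ m0, sv = lam m0
      · obtain ⟨m0, hm0⟩ := hsm
        have hui : ∀ i, i ≠ m0 → u i = 0 := by
          intro i him
          have h6 := hcu2 i
          rw [Finset.prod_eq_zero
            (Finset.mem_erase.mpr ⟨Ne.symm him, Finset.mem_univ m0⟩)
            (by rw [← hm0, sub_self]), mul_zero] at h6
          rcases mul_eq_zero.mp h6.symm with h7 | h7
          · exact absurd h7 c.ne_zero
          · exact h7
        have hum0 : u m0 ≠ 0 := by
          intro h0
          apply q.rep_nonzero
          rw [hqrep, Module.Basis.equivFun_symm_apply]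
          apply Finset.sum_eq_zero
          intro i _
          rcases eq_or_ne i m0 with rfl | him
          · rw [h0, zero_smul]
          · rw [hui i him, zero_smul]
        apply hqS
        have hql : q = P m0.castSucc := by
          rw [← Projectivization.mk_rep q, ← hmkf m0.castSucc]
          apply (Projectivization.mk_eq_mk_iff' k _ _ _ _).mpr
          refine ⟨u m0 * p m0, ?_⟩
          rw [hqrep, Module.Basis.equivFun_symm_apply,
            Finset.sum_eq_single m0
              (fun i _ him => by rw [hui i him, zero_smul])
              (fun hm => absurd (Finset.mem_univ m0) hm),
            hB m0, hbV m0, smul_smul]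
        rw [hql]
        exact hPS _
      · push_neg at hsm
        have hune : ∀ i, u i ≠ 0 := by
          intro i h0
          have h6 := hcu2 i
          rw [h0, mul_zero] at h6
          rcases mul_eq_zero.mp h6 with h7 | h7
          · exact pow_ne_zero r hb h7
          · exact (Finset.prod_ne_zero_iff.mpr
              fun m' _ => sub_ne_zero.mpr (hsm m')) h7
        have h8 : ∀ j : Fin (r + 1), (c : k) * ((sv - lam j) * u j)
            = b ^ r * ∏ m', (sv - lam m') := by
          intro j
          calc (c : k) * ((sv - lam j) * u j) = (sv - lam j) * ((c : k) * u j) := by ring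
            _ = (sv - lam j) * (b ^ r * ∏ m' ∈ Finset.univ.erase j, (sv - lam m')) := by
                rw [hcu2 j]
            _ = b ^ r * ((sv - lam j) * ∏ m' ∈ Finset.univ.erase j, (sv - lam m')) := by ring
            _ = b ^ r * ∏ m', (sv - lam m') := by
                rw [Finset.mul_prod_erase Finset.univ (fun m' => sv - lam m')
                  (Finset.mem_univ j)]
        have hrel : ∀ i i', (sv - lam i) * u i = (sv - lam i') * u i' :=
          fun i i' => mul_left_cancel₀ c.ne_zero ((h8 i).trans (h8 i').symm)
        have e12 := hrel i1 i2
        have e01 := hrel i0 i1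
        rw [hlam1, hlam2] at e12
        rw [hlam0, hlam1] at e01
        have h12 : u i1 - u i2 ≠ 0 := by
          intro h0
          apply hune i1
          have hu12 : u i2 = u i1 := by linear_combination -h0
          rw [hu12] at e12
          linear_combination e12
        have hs_eq : sq q = sv := by
          rw [hsq]
          show (uq q i1 - 2 * uq q i2) / (uq q i1 - uq q i2) = sv
          have huu : uq q = u := rfl
          rw [huu, div_eq_iff h12]
          linear_combination -e12
        have ht_eq : tq q = t := by
          rw [htqdef]
          show sq q - (sq q - 1) * uq q i1 / uq q i0 = t
          have huu : uq q = u := rfl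
          rw [huu, hs_eq]
          have h9 : (sv - 1) * u i1 / u i0 = sv - t := by
            rw [div_eq_iff (hune i0)]
            linear_combination -e01
          linear_combination -h9
        exact htq ⟨q, hqF, ht_eq⟩
end

section
/- Let k be an algebraically closed field of characteristic zero and r ≥ 3 an integer. Let S ⊂ ℙ^r(k) be a set of r+2 points in linearly general position. Then a point Q ∈ ℙ^r(k) \ S lies on some rational normal curve containing S if and only if S ∪ {Q} is in linearly general position; i.e., the union of all rational normal curves containing S equals S ∪ {Q ∈ ℙ^r(k) : S ∪ {Q} is in linearly general position}. -/
open Projectivization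

section Aux

open Polynomial

variable {k : Type*} [Field k]

private def sv (r : ℕ) (a b : k) : Fin (r+1) → k := fun j => a ^ (r - (j:ℕ)) * b ^ (j:ℕ)

lemma sv_ne_zero {r : ℕ} {a b : k} (h : a ≠ 0 ∨ b ≠ 0) : sv r a b ≠ 0 := by
  rcases h with h | h
  · intro hz
    have h0 := congrFun hz ⟨0, by omega⟩
    simp only [sv] at h0
    norm_num at h0
    exact h h0.1
  · intro hz
    have h0 := congrFun hz ⟨r, by omega⟩
    simp only [sv] at h0
    norm_num at h0
    exact h h0.1

lemma sv_zero {r : ℕ} (hr : 1 ≤ r) : sv r (0:k) 0 = 0 := by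
  funext j
  rcases Nat.eq_zero_or_pos (j : ℕ) with h | h
  · have h2 : r - (j:ℕ) ≠ 0 := by omega
    have h3 : r - (j:ℕ) = r := by omega
    simp [sv, h, h3, zero_pow (by omega : r ≠ 0)]
  · simp [sv, h.ne']

lemma sv_smul {r : ℕ} (c a b : k) : sv r (c*a) (c*b) = c^r • sv r a b := by
  funext j
  have hj : (j:ℕ) ≤ r := by omega
  simp only [sv, Pi.smul_apply, smul_eq_mul, mul_pow]
  rw [show c^r = c^(r - (j:ℕ)) * c^(j:ℕ) by rw [← pow_add]; congr 1; omega]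
  ring

/-- proportional parameters give equal projective points -/
lemma mk_sv_eq {r : ℕ} {a b a' b' : k} (h : a ≠ 0 ∨ b ≠ 0) (h' : a' ≠ 0 ∨ b' ≠ 0)
    (hprop : a * b' = a' * b) :
    Projectivization.mk k (sv r a b) (sv_ne_zero h) = Projectivization.mk k (sv r a' b') (sv_ne_zero h') := by
  rcases eq_or_ne a' 0 with ha' | ha'
  · have hb' : b' ≠ 0 := by tauto
    have ha : a = 0 := by
      have h2 : a * b' = 0 := by rw [hprop, ha', zero_mul]
      exact (mul_eq_zero.mp h2).resolve_right hb'
    have hb : b ≠ 0 := by tauto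
    rw [mk_eq_mk_iff]
    refine ⟨Units.mk0 ((b/b')^r) (pow_ne_zero _ (div_ne_zero hb hb')), ?_⟩
    have h3 : sv r a b = sv r ((b/b') * a') ((b/b') * b') := by
      rw [ha, ha', mul_zero, div_mul_cancel₀ _ hb']
    rw [h3, sv_smul]
    rfl
  · have hc : a ≠ 0 := by
      intro ha
      have h2 : a' * b = 0 := by rw [← hprop, ha, zero_mul]
      exact (h.resolve_left (by simp [ha])) ((mul_eq_zero.mp h2).resolve_left ha')
    rw [mk_eq_mk_iff]
    refine ⟨Units.mk0 ((a/a')^r) (pow_ne_zero _ (div_ne_zero hc ha')), ?_⟩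
    have h3 : sv r a b = sv r ((a/a') * a') ((a/a') * b') := by
      have hb : b = (a/a') * b' := by field_simp; linear_combination -hprop
      rw [← hb, div_mul_cancel₀ _ ha']
    rw [h3, sv_smul]
    rfl


-- transfer: reps of points vs chosen representatives
lemma rep_eq_unit_smul {V : Type*} [AddCommGroup V] [Module k V] (v : V) (hv : v ≠ 0) :
    ∃ c : kˣ, (Projectivization.mk k v hv).rep = c • v := by
  have h := Projectivization.mk_rep (Projectivization.mk k v hv)
  rw [mk_eq_mk_iff] at h
  obtain ⟨c, hc⟩ := h
  exact ⟨c, hc.symm⟩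

lemma li_reps_of_li {r : ℕ} {ι : Type*} (w : ι → (Fin (r+1) → k)) (hw : ∀ i, w i ≠ 0)
    (h : LinearIndependent k w) :
    LinearIndependent k (fun i => (Projectivization.mk k (w i) (hw i)).rep) := by
  choose c hc using fun i => rep_eq_unit_smul (k := k) (w i) (hw i)
  have : (fun i => (Projectivization.mk k (w i) (hw i)).rep) = c • w := by
    funext i; exact hc i
  rw [this]
  exact h.units_smul c

-- extract LI families from InLinGenPos
lemma lgp_extract {r : ℕ} {S : Set (Projectivization k (Fin (r+1) → k))}
    (hS : InLinGenPos k r S) {ι : Type*} [Fintype ι]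
    (P : ι → Projectivization k (Fin (r+1) → k)) (hinj : Function.Injective P)
    (hmem : ∀ i, P i ∈ S) (hcard : Fintype.card ι ≤ r+1) :
    LinearIndependent k (fun i => (P i).rep) := by
  classical
  set T : Finset _ := Finset.image P Finset.univ with hT
  have hTcard : T.card ≤ r + 1 := by
    rw [hT, Finset.card_image_of_injective _ hinj, Finset.card_univ]; exact hcard
  have hsub : ↑T ⊆ S := by
    intro x hx
    simp only [hT, Finset.coe_image, Set.mem_image] at hx
    obtain ⟨i, _, rfl⟩ := hx
    exact hmem i
  have h := hS T hsub hTcard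
  let e : ι ≃ T := Equiv.ofBijective (fun i => ⟨P i, by simp [hT]⟩)
    ⟨fun i j hij => hinj (Subtype.ext_iff.mp hij),
     fun ⟨x, hx⟩ => by
      simp only [hT, Finset.mem_image, Finset.mem_univ, true_and] at hx
      obtain ⟨i, hi⟩ := hx
      exact ⟨i, Subtype.ext hi⟩⟩
  have h2 := h.comp e e.injective
  have heq : (fun i => (P i).rep) = (fun (Q : T) => Q.1.rep) ∘ ⇑e := by
    funext i; rfl
  rw [heq]
  exact h2


/-- distinct points on the standard rational normal curve are in linearly general position -/
lemma sv_li : ∀ (n : ℕ) (r : ℕ), n ≤ r + 1 → ∀ (a b : Fin n → k),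
    (∀ i, a i ≠ 0 ∨ b i ≠ 0) →
    (∀ i j, i ≠ j → a i * b j ≠ a j * b i) →
    LinearIndependent k (fun i => sv r (a i) (b i)) := by
  intro n
  induction n with
  | zero => intro r _ a b _ _; exact linearIndependent_empty_type
  | succ n ih =>
    intro r hn a b hnz hpair
    rw [Fintype.linearIndependent_iff]
    intro c hc
    rcases Nat.eq_zero_or_pos n with hn0 | hn0
    · subst hn0
      intro m
      have hm : m = 0 := by omega
      subst hm
      have h1 : c 0 • sv r (a 0) (b 0) = 0 := by
        rw [← hc]
        simp [Fin.sum_univ_one]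
      rcases smul_eq_zero.mp h1 with h | h
      · exact h
      · exact absurd h (sv_ne_zero (hnz 0))
    · -- n ≥ 1, so r ≥ 1
      obtain ⟨e, rfl⟩ : ∃ e, r = e + 1 := ⟨r - 1, by omega⟩
      intro m
      -- choose i0 ≠ m
      obtain ⟨i0, hi0⟩ : ∃ i0 : Fin (n+1), i0 ≠ m := by
        rcases eq_or_ne m 0 with rfl | hm
        · exact ⟨⟨1, by omega⟩, by simp [Fin.ext_iff]⟩
        · exact ⟨0, Ne.symm hm⟩
      -- the divided-difference linear map
      let D : ((Fin (e+2) → k) →ₗ[k] (Fin (e+1) → k)) :=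
        { toFun := fun v j => b i0 * v j.castSucc - a i0 * v j.succ
          map_add' := by intro v w; funext j; simp; ring
          map_smul' := by intro t v; funext j; simp; ring }
      have hD : ∀ i, D (sv (e+1) (a i) (b i))
          = (b i0 * a i - a i0 * b i) • sv e (a i) (b i) := by
        intro i
        funext j
        have hj : (j : ℕ) ≤ e := by omega
        simp only [D, LinearMap.coe_mk, AddHom.coe_mk, sv, Pi.smul_apply, smul_eq_mul,
          Fin.coe_castSucc, Fin.val_succ]
        have h1 : e + 1 - (j : ℕ) = (e - (j:ℕ)) + 1 := by omega
        have h2 : e + 1 - ((j : ℕ) + 1) = e - (j:ℕ) := by omega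
        rw [h1, h2, pow_succ, pow_succ]
        ring
      have hsum : ∑ i : Fin (n+1), (c i * (b i0 * a i - a i0 * b i)) • sv e (a i) (b i) = 0 := by
        have := congrArg D hc
        rw [map_sum, map_zero] at this
        rw [← this]
        apply Finset.sum_congr rfl
        intro i _
        rw [map_smul, hD, smul_smul]
      rw [Fin.sum_univ_succAbove _ i0] at hsum
      have hz0 : (c i0 * (b i0 * a i0 - a i0 * b i0)) • sv e (a i0) (b i0) = 0 := by
        have : b i0 * a i0 - a i0 * b i0 = 0 := by ring
        rw [this, mul_zero, zero_smul]
      rw [hz0, zero_add] at hsum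
      have hli := ih e (by omega) (a ∘ i0.succAbove) (b ∘ i0.succAbove)
        (fun i => hnz _) (fun i j hij => hpair _ _ (fun h => hij (i0.succAbove_right_injective h)))
      have hz := (Fintype.linearIndependent_iff.mp hli) _ hsum
      obtain ⟨m', hm'⟩ := Fin.exists_succAbove_eq (Ne.symm hi0)
      have := hz m'
      rw [hm'] at this
      rcases mul_eq_zero.mp this with h | h
      · exact h
      · exact absurd (by linear_combination -h) (hpair i0 m hi0)


/-- any at most r+1 points on a rational normal curve have linearly independent reps -/
lemma rnc_li {r : ℕ} (hr : 1 ≤ r) {D : Set (Projectivization k (Fin (r+1) → k))}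
    (hD : IsRNC k r D) (T : Finset (Projectivization k (Fin (r+1) → k)))
    (hT : ↑T ⊆ D) (hTc : T.card ≤ r + 1) :
    LinearIndependent k (fun P : T => Projectivization.rep P.1) := by
  classical
  obtain ⟨g, rfl⟩ := hD
  -- choose parameters for each point of T
  have hch : ∀ P : T, ∃ a b : k, ∃ (hab : a ≠ 0 ∨ b ≠ 0),
      Projectivization.map (g : (Fin (r+1) → k) →ₗ[k] (Fin (r+1) → k)) g.injective
        (Projectivization.mk k (sv r a b) (sv_ne_zero hab)) = P.1 := by
    rintro ⟨P, hP⟩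
    obtain ⟨x, hx, hxP⟩ := hT hP
    obtain ⟨a, b, hab, rfl⟩ := hx
    have hab' : a ≠ 0 ∨ b ≠ 0 := by
      by_contra hcon
      push_neg at hcon
      apply hab
      rw [hcon.1, hcon.2]
      exact sv_zero hr
    exact ⟨a, b, hab', hxP⟩
  choose a b hab hmap using hch
  -- pairwise non-proportionality
  have hpair : ∀ P Q : T, P ≠ Q → a P * b Q ≠ a Q * b P := by
    intro P Q hPQ hprop
    apply hPQ
    have := mk_sv_eq (r := r) (hab P) (hab Q) hprop
    have h2 : (Projectivization.map (g : (Fin (r+1) → k) →ₗ[k] (Fin (r+1) → k)) g.injective)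
        (Projectivization.mk k (sv r (a P) (b P)) (sv_ne_zero (hab P)))
      = (Projectivization.map (g : (Fin (r+1) → k) →ₗ[k] (Fin (r+1) → k)) g.injective)
        (Projectivization.mk k (sv r (a Q) (b Q)) (sv_ne_zero (hab Q))) := by rw [this]
    rw [hmap P, hmap Q] at h2
    exact Subtype.ext h2
  -- linear independence of the underlying vectors
  have e : T ≃ Fin T.card := T.equivFin
  have hli0 : LinearIndependent k (fun P : T => sv r (a P) (b P)) := by
    have h1 := sv_li T.card r (by omega) (fun i => a (e.symm i)) (fun i => b (e.symm i))
      (fun i => hab _) (fun i j hij => hpair _ _ (fun h => hij (by simpa using congrArg e h)))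
    have h2 := h1.comp e e.injective
    have heq : (fun P : T => sv r (a P) (b P))
        = (fun i => sv r (a (e.symm i)) (b (e.symm i))) ∘ e := by
      funext P; simp
    rw [heq]
    exact h2
  -- map through g
  have hli1 : LinearIndependent k (fun P : T => g (sv r (a P) (b P))) :=
    hli0.map' g.toLinearMap g.ker
  -- reps are unit multiples
  have hv : ∀ P : T, g (sv r (a P) (b P)) ≠ 0 := by
    intro P hz
    exact sv_ne_zero (hab P) (g.map_eq_zero_iff.mp hz)
  choose c hc using fun P : T => rep_eq_unit_smul (k := k) _ (hv P)
  have heq : (fun P : T => Projectivization.rep P.1) = fun P : T => c P • g (sv r (a P) (b P)) := by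
    funext P
    have h3 := hmap P
    rw [Projectivization.map_mk] at h3
    rw [← h3]
    exact hc P
  rw [heq]
  exact hli1.units_smul c


lemma curveExists {r : ℕ} (B : Module.Basis (Fin (r+1)) k (Fin (r+1) → k))
    (t : Fin (r+1) → k) (ht : Function.Injective t) :
    ∃ g : (Fin (r+1) → k) ≃ₗ[k] (Fin (r+1) → k),
      (∀ i : Fin (r+1), ∃ d : k, d ≠ 0 ∧ g (sv r (1:k) (t i)) = d • B i) ∧
      g (sv r (0:k) 1) = ∑ i, B i ∧
      g (sv r (1:k) 0) = ∑ i, (∏ l ∈ Finset.univ.erase i, (0 - t l)) • B i := by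
  classical
  set p : Fin (r+1) → k[X] := fun i => ∏ l ∈ Finset.univ.erase i, (X - C (t l)) with hp
  have hmonic : ∀ i, (p i).Monic := fun i => monic_prod_of_monic _ _ (fun l _ => monic_X_sub_C _)
  have hdeg : ∀ i, (p i).natDegree = r := by
    intro i
    rw [hp]
    rw [natDegree_prod_of_monic _ _ (fun l _ => monic_X_sub_C _)]
    simp [natDegree_X_sub_C]
  have hdegLT : ∀ i, p i ∈ degreeLT k (r+1) := by
    intro i
    rw [mem_degreeLT]
    calc (p i).degree ≤ (p i).natDegree := degree_le_natDegree
    _ < (r+1 : ℕ) := by rw [hdeg i]; exact_mod_cast Nat.lt_succ_self r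
  -- evaluation of p i at t m
  have heval_ne : ∀ i, (p i).eval (t i) ≠ 0 := by
    intro i
    rw [hp]
    simp only [eval_prod, eval_sub, eval_X, eval_C]
    apply Finset.prod_ne_zero_iff.mpr
    intro l hl
    exact sub_ne_zero.mpr (fun h => (Finset.mem_erase.mp hl).1 (ht (by rw [h])))
  have heval_zero : ∀ i m, m ≠ i → (p i).eval (t m) = 0 := by
    intro i m hmi
    rw [hp]
    simp only [eval_prod, eval_sub, eval_X, eval_C]
    exact Finset.prod_eq_zero (Finset.mem_erase.mpr ⟨hmi, Finset.mem_univ m⟩) (by ring)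
  set M : Matrix (Fin (r+1)) (Fin (r+1)) k := Matrix.of fun i j => (p i).coeff j with hM
  -- key: M.mulVec of a curve vector
  have hmul : ∀ a b : k, M.mulVec (sv r a b) = fun i => ∑ j : Fin (r+1), (p i).coeff j * (a ^ (r - (j:ℕ)) * b ^ (j:ℕ)) := by
    intro a b
    funext i
    simp [Matrix.mulVec, dotProduct, hM, sv]
  -- the linear map
  set F : (Fin (r+1) → k) →ₗ[k] (Fin (r+1) → k) :=
    (B.equivFun.symm.toLinearMap) ∘ₗ M.mulVecLin with hF
  -- injectivity of mulVecLin
  have hinj : Function.Injective M.mulVecLin := by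
    rw [← LinearMap.ker_eq_bot]
    rw [LinearMap.ker_eq_bot']
    intro v hv
    -- the functional
    set ψ : k[X] →ₗ[k] k := ∑ j : Fin (r+1), v j • lcoeff k (j:ℕ) with hψ
    have hψp : ∀ i, ψ (p i) = 0 := by
      intro i
      have h1 : M.mulVec v i = 0 := by
        have h2 := congrFun hv i
        rwa [Matrix.mulVecLin_apply] at h2
      rw [hψ]
      simp only [LinearMap.sum_apply, LinearMap.smul_apply, lcoeff_apply, smul_eq_mul]
      rw [← h1]
      simp [Matrix.mulVec, dotProduct, hM, mul_comm]
    have hψX : ∀ jo : Fin (r+1), ψ (X ^ (jo:ℕ)) = v jo := by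
      intro jo
      rw [hψ]
      simp only [LinearMap.sum_apply, LinearMap.smul_apply, lcoeff_apply, smul_eq_mul,
        coeff_X_pow]
      rw [Finset.sum_eq_single jo, if_pos rfl, mul_one]
      · intro j _ hj
        have hne : ¬ ((j:ℕ) = (jo:ℕ)) := fun h => hj (Fin.ext h)
        simp [hne]
      · simp
    -- p i are linearly independent
    have hli : LinearIndependent k p := by
      rw [Fintype.linearIndependent_iff]
      intro d hd m
      have h1 := congrArg (Polynomial.eval (t m)) hd
      simp only [eval_finset_sum, eval_smul, smul_eq_mul, eval_zero] at h1
      rw [Finset.sum_eq_single m] at h1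
      · exact (mul_eq_zero.mp h1).resolve_right (heval_ne m)
      · intro i _ him
        rw [heval_zero i m (Ne.symm him), mul_zero]
      · simp
    -- transfer to degreeLT submodule and conclude spanning
    have hfinrank : Module.finrank k (degreeLT k (r+1)) = r + 1 := by
      rw [(Polynomial.degreeLTEquiv k (r+1)).finrank_eq]
      simp
    set p' : Fin (r+1) → degreeLT k (r+1) := fun i => ⟨p i, hdegLT i⟩ with hp'
    have hli' : LinearIndependent k p' := by
      apply LinearIndependent.of_comp (degreeLT k (r+1)).subtype
      exact hli
    have hXspan : ∀ jo : Fin (r+1), (X : k[X]) ^ (jo:ℕ) ∈ Submodule.span k (Set.range p) := by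
      intro jo
      have hXmem : (X : k[X]) ^ (jo:ℕ) ∈ degreeLT k (r+1) := by
        rw [mem_degreeLT, degree_X_pow]
        exact_mod_cast Nat.lt_succ_of_le (by omega)
      have h1 : (⟨(X:k[X])^(jo:ℕ), hXmem⟩ : degreeLT k (r+1)) ∈ Submodule.span k (Set.range p') := by
        have h2 := (basisOfLinearIndependentOfCardEqFinrank hli' (by simp [hfinrank])).span_eq
        rw [coe_basisOfLinearIndependentOfCardEqFinrank] at h2
        rw [h2]
        trivial
      have h3 : (X : k[X]) ^ (jo:ℕ) ∈ Submodule.map (degreeLT k (r+1)).subtype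
          (Submodule.span k (Set.range p')) := ⟨_, h1, rfl⟩
      rw [Submodule.map_span] at h3
      have h4 : (degreeLT k (r+1)).subtype '' Set.range p' = Set.range p := by
        rw [← Set.range_comp]
        rfl
      rwa [h4] at h3
    have hker : Submodule.span k (Set.range p) ≤ LinearMap.ker ψ := by
      rw [Submodule.span_le]
      rintro _ ⟨i, rfl⟩
      exact hψp i
    funext jo
    rw [Pi.zero_apply, ← hψX jo]
    exact hker (hXspan jo)
  -- F is injective, hence bijective
  have hFinj : Function.Injective F := by
    rw [hF]
    exact (B.equivFun.symm.injective).comp hinj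
  have hFsurj : Function.Surjective F := LinearMap.injective_iff_surjective.mp hFinj
  refine ⟨LinearEquiv.ofBijective F ⟨hFinj, hFsurj⟩, ?_, ?_, ?_⟩
  · -- points at parameters t i
    intro i0
    refine ⟨(p i0).eval (t i0), heval_ne i0, ?_⟩
    show F (sv r 1 (t i0)) = _
    rw [hF]
    simp only [LinearMap.coe_comp, Function.comp_apply, Matrix.mulVecLin_apply,
      LinearEquiv.coe_coe, Module.Basis.equivFun_symm_apply, hmul]
    have hev : ∀ i, (∑ j : Fin (r+1), (p i).coeff j * ((1:k) ^ (r - (j:ℕ)) * (t i0) ^ (j:ℕ)))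
        = (p i).eval (t i0) := by
      intro i
      rw [eval_eq_sum_range, hdeg i,
        ← Fin.sum_univ_eq_sum_range (fun j => (p i).coeff j * (t i0)^j) (r+1)]
      simp
    simp only [hev]
    rw [Finset.sum_eq_single i0]
    · intro i _ hii0
      rw [heval_zero i i0 (Ne.symm hii0), zero_smul]
    · simp
  · -- point at infinity
    show F (sv r (0:k) 1) = _
    rw [hF]
    simp only [LinearMap.coe_comp, Function.comp_apply, Matrix.mulVecLin_apply,
      LinearEquiv.coe_coe, Module.Basis.equivFun_symm_apply, hmul]
    have hev : ∀ i, (∑ j : Fin (r+1), (p i).coeff j * ((0:k) ^ (r - (j:ℕ)) * (1:k) ^ (j:ℕ))) = 1 := by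
      intro i
      rw [Finset.sum_eq_single (Fin.last r)]
      · simp only [Fin.val_last, Nat.sub_self, pow_zero, one_pow, mul_one]
        have := (hmonic i).coeff_natDegree
        rw [hdeg i] at this
        exact this
      · intro j _ hj
        have hjr : (j:ℕ) < r := by
          rcases lt_or_eq_of_le (Nat.lt_succ_iff.mp j.isLt) with h | h
          · exact h
          · exact absurd (Fin.ext h : j = Fin.last r) hj
        have : r - (j:ℕ) ≠ 0 := by omega
        rw [zero_pow this]
        ring
      · simp
    simp only [hev, one_smul]
  · -- the extra point
    show F (sv r (1:k) 0) = _
    rw [hF]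
    simp only [LinearMap.coe_comp, Function.comp_apply, Matrix.mulVecLin_apply,
      LinearEquiv.coe_coe, Module.Basis.equivFun_symm_apply, hmul]
    have hev : ∀ i, (∑ j : Fin (r+1), (p i).coeff j * ((1:k) ^ (r - (j:ℕ)) * (0:k) ^ (j:ℕ)))
        = ∏ l ∈ Finset.univ.erase i, (0 - t l) := by
      intro i
      rw [Finset.sum_eq_single (0 : Fin (r+1))]
      · simp only [Fin.val_zero, pow_zero, one_pow, one_mul, mul_one]
        rw [coeff_zero_eq_eval_zero, hp]
        simp [eval_prod]
      · intro j _ hj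
        have : (j : ℕ) ≠ 0 := fun h => hj (Fin.ext h)
        rw [zero_pow this]
        ring
      · simp
    simp only [hev]


/-- From r+2 points in LGP, build an adapted basis. -/
lemma frameBasis {r : ℕ} {S : Set (Projectivization k (Fin (r+1) → k))}
    (hS : InLinGenPos k r S) (P : Fin (r+2) → Projectivization k (Fin (r+1) → k))
    (hinj : Function.Injective P) (hmem : ∀ m, P m ∈ S) :
    ∃ B : Module.Basis (Fin (r+1)) k (Fin (r+1) → k),
      (∀ i : Fin (r+1), ∃ d : k, d ≠ 0 ∧ B i = d • (P i.castSucc).rep) ∧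
      (∑ i, B i) = (P (Fin.last (r+1))).rep := by
  classical
  set u : Fin (r+2) → (Fin (r+1) → k) := fun m => (P m).rep with hu
  have hli0 : LinearIndependent k (fun i : Fin (r+1) => u i.castSucc) := by
    apply lgp_extract hS (fun i : Fin (r+1) => P i.castSucc)
      (fun i j h => Fin.castSucc_injective _ (hinj h)) (fun i => hmem _)
    simp
  have hcards : Fintype.card (Fin (r+1)) = Module.finrank k (Fin (r+1) → k) := by simp
  set B0 := basisOfLinearIndependentOfCardEqFinrank hli0 hcards with hB0
  have hB0c : ∀ i, B0 i = u i.castSucc := by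
    intro i
    rw [hB0, coe_basisOfLinearIndependentOfCardEqFinrank]
  set c : Fin (r+1) → k := fun i => B0.repr (u (Fin.last (r+1))) i with hc
  have hrepr : ∑ i, c i • B0 i = u (Fin.last (r+1)) := B0.sum_repr _
  -- all coordinates nonzero
  have hcz : ∀ i, c i ≠ 0 := by
    intro i hci
    set w : Fin (r+1) → Fin (r+2) :=
      Fin.snoc (fun j : Fin r => (i.succAbove j).castSucc) (Fin.last (r+1)) with hw
    have hwinj : Function.Injective w := by
      intro m n hmn
      rcases Fin.eq_castSucc_or_eq_last m with ⟨m', rfl⟩ | rfl <;>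
        rcases Fin.eq_castSucc_or_eq_last n with ⟨n', rfl⟩ | rfl
      · rw [hw, Fin.snoc_castSucc, Fin.snoc_castSucc] at hmn
        rw [Fin.succAbove_right_injective (p := i) (Fin.castSucc_injective _ hmn)]
      · rw [hw, Fin.snoc_castSucc, Fin.snoc_last] at hmn
        exact absurd hmn (Fin.castSucc_lt_last _).ne
      · rw [hw, Fin.snoc_last, Fin.snoc_castSucc] at hmn
        exact absurd hmn.symm (Fin.castSucc_lt_last _).ne
      · rfl
    have hfam : LinearIndependent k (fun m : Fin (r+1) => (P (w m)).rep) := by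
      apply lgp_extract hS (fun m => P (w m)) (fun m n hmn => hwinj (hinj hmn))
        (fun m => hmem _) (by simp)
    have hspan : (P (w (Fin.last r))).rep ∈ Submodule.span k
        ((fun m : Fin (r+1) => (P (w m)).rep) '' (Set.univ \ {Fin.last r})) := by
      have hwl : w (Fin.last r) = Fin.last (r+1) := by rw [hw, Fin.snoc_last]
      rw [hwl]
      have husum : u (Fin.last (r+1)) = ∑ j : Fin r, c (i.succAbove j) • B0 (i.succAbove j) := by
        rw [← hrepr, Fin.sum_univ_succAbove (fun j => c j • B0 j) i, hci, zero_smul, zero_add]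
      simp only [hu] at husum
      rw [husum]
      apply Submodule.sum_mem
      intro j _
      apply Submodule.smul_mem
      apply Submodule.subset_span
      refine ⟨j.castSucc, ⟨trivial, (Fin.castSucc_lt_last _).ne⟩, ?_⟩
      have hwj : w j.castSucc = (i.succAbove j).castSucc := by rw [hw, Fin.snoc_castSucc]
      show (P (w j.castSucc)).rep = B0 (i.succAbove j)
      rw [hwj, hB0c]
    exact hfam.notMem_span_image (by simp) hspan
  refine ⟨B0.unitsSMul (fun i => Units.mk0 (c i) (hcz i)), ?_, ?_⟩
  · intro i
    refine ⟨c i, hcz i, ?_⟩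
    rw [Module.Basis.unitsSMul_apply, hB0c]
    rfl
  · have : ∀ i, (B0.unitsSMul (fun i => Units.mk0 (c i) (hcz i))) i = c i • B0 i := by
      intro i; rw [Module.Basis.unitsSMul_apply]; rfl
    rw [Finset.sum_congr rfl (fun i _ => this i), hrepr]


lemma qCond {r : ℕ} {S : Set (Projectivization k (Fin (r+1) → k))}
    (P : Fin (r+2) → Projectivization k (Fin (r+1) → k))
    (hinj : Function.Injective P) (hmem : ∀ m, P m ∈ S)
    (B : Module.Basis (Fin (r+1)) k (Fin (r+1) → k))
    (hB : ∀ i : Fin (r+1), ∃ d : k, d ≠ 0 ∧ B i = d • (P i.castSucc).rep)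
    (hBsum : (∑ i, B i) = (P (Fin.last (r+1))).rep)
    (Q : Projectivization k (Fin (r+1) → k)) (hQS : Q ∉ S)
    (hlgp : InLinGenPos k r (insert Q S)) :
    (∀ i, B.repr Q.rep i ≠ 0) ∧
    (∀ i j, i ≠ j → B.repr Q.rep i ≠ B.repr Q.rep j) := by
  classical
  set q : Fin (r+1) → k := fun i => B.repr Q.rep i with hq
  have hrepr : ∑ l, q l • B l = Q.rep := B.sum_repr _
  constructor
  · -- q i ≠ 0
    intro i hqi0
    have hqi : q i = 0 := hqi0
    set w : Fin (r+1) → Projectivization k (Fin (r+1) → k) :=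
      Fin.snoc (fun j : Fin r => P ((i.succAbove j).castSucc)) Q with hw
    have hwinj : Function.Injective w := by
      intro m n hmn
      rcases Fin.eq_castSucc_or_eq_last m with ⟨m', rfl⟩ | rfl <;>
        rcases Fin.eq_castSucc_or_eq_last n with ⟨n', rfl⟩ | rfl
      · rw [hw, Fin.snoc_castSucc, Fin.snoc_castSucc] at hmn
        exact congrArg Fin.castSucc (Fin.succAbove_right_injective (p := i)
          (Fin.castSucc_injective _ (hinj hmn)))
      · rw [hw, Fin.snoc_castSucc, Fin.snoc_last] at hmn
        exact absurd (hmn ▸ hmem _) hQS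
      · rw [hw, Fin.snoc_last, Fin.snoc_castSucc] at hmn
        exact absurd (hmn ▸ hmem _) hQS
      · rfl
    have hfam : LinearIndependent k (fun m : Fin (r+1) => (w m).rep) := by
      apply lgp_extract hlgp w hwinj ?_ (by simp)
      intro m
      rcases Fin.eq_castSucc_or_eq_last m with ⟨m', rfl⟩ | rfl
      · rw [hw, Fin.snoc_castSucc]; exact Set.mem_insert_iff.mpr (Or.inr (hmem _))
      · rw [hw, Fin.snoc_last]; exact Set.mem_insert _ _
    have hspan : (w (Fin.last r)).rep ∈ Submodule.span k
        ((fun m : Fin (r+1) => (w m).rep) '' (Set.univ \ {Fin.last r})) := by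
      have hwl : w (Fin.last r) = Q := by rw [hw, Fin.snoc_last]
      rw [hwl]
      have husum : Q.rep = ∑ j : Fin r, q (i.succAbove j) • B (i.succAbove j) := by
        rw [← hrepr, Fin.sum_univ_succAbove (fun l => q l • B l) i, hqi, zero_smul, zero_add]
      rw [husum]
      apply Submodule.sum_mem
      intro j _
      obtain ⟨d, hd0, hdB⟩ := hB (i.succAbove j)
      rw [hdB, smul_smul]
      apply Submodule.smul_mem
      apply Submodule.subset_span
      refine ⟨j.castSucc, ⟨trivial, (Fin.castSucc_lt_last _).ne⟩, ?_⟩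
      show (w j.castSucc).rep = _
      rw [hw, Fin.snoc_castSucc]
    exact hfam.notMem_span_image (by simp) hspan
  · -- q i ≠ q j
    intro i j hij hqij0
    have hqij : q i = q j := hqij0
    set ι := (↥(({i,j}ᶜ : Finset (Fin (r+1))))) ⊕ Fin 2 with hι
    set w : ι → Projectivization k (Fin (r+1) → k) :=
      Sum.elim (fun l => P l.1.castSucc) ![P (Fin.last (r+1)), Q] with hw
    have hcardι : Fintype.card ι ≤ r + 1 := by
      show Fintype.card ((↥(({i,j}ᶜ : Finset (Fin (r+1))))) ⊕ Fin 2) ≤ r + 1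
      rw [Fintype.card_sum, Fintype.card_coe, Finset.card_compl]
      have h2 : ({i,j} : Finset (Fin (r+1))).card = 2 := Finset.card_pair hij
      rw [h2]
      simp
      omega
    have hQne : ∀ m : Fin (r+2), Q ≠ P m := fun m h => hQS (h ▸ hmem m)
    have hwinj : Function.Injective w := by
      rintro (m | m) (n | n) hmn
      · rw [hw] at hmn
        simp only [Sum.elim_inl] at hmn
        exact congrArg Sum.inl (Subtype.ext (Fin.castSucc_injective _ (hinj hmn)))
      · rw [hw] at hmn
        simp only [Sum.elim_inl, Sum.elim_inr] at hmn
        exfalso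
        rcases (by omega : (n:ℕ) = 0 ∨ (n:ℕ) = 1) with h | h
        · have : n = 0 := Fin.ext h
          subst this
          simp at hmn
          exact (Fin.castSucc_lt_last _).ne (hinj hmn)
        · have : n = 1 := Fin.ext h
          subst this
          simp at hmn
          exact hQne _ hmn.symm
      · rw [hw] at hmn
        simp only [Sum.elim_inl, Sum.elim_inr] at hmn
        exfalso
        rcases (by omega : (m:ℕ) = 0 ∨ (m:ℕ) = 1) with h | h
        · have : m = 0 := Fin.ext h
          subst this
          simp at hmn
          exact (Fin.castSucc_lt_last _).ne (hinj hmn.symm)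
        · have : m = 1 := Fin.ext h
          subst this
          simp at hmn
          exact hQne _ hmn
      · rw [hw] at hmn
        simp only [Sum.elim_inr] at hmn
        congr 1
        rcases (by omega : (m:ℕ) = 0 ∨ (m:ℕ) = 1) with h | h <;>
          rcases (by omega : (n:ℕ) = 0 ∨ (n:ℕ) = 1) with h' | h'
        · exact Fin.ext (by omega)
        · exfalso
          have hm : m = 0 := Fin.ext h
          have hn : n = 1 := Fin.ext h'
          subst hm; subst hn
          simp at hmn
          exact hQne _ hmn.symm
        · exfalso
          have hm : m = 1 := Fin.ext h
          have hn : n = 0 := Fin.ext h'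
          subst hm; subst hn
          simp at hmn
          exact hQne _ hmn
        · exact Fin.ext (by omega)
    have hfam : LinearIndependent k (fun m : ι => (w m).rep) := by
      apply lgp_extract hlgp w hwinj ?_ hcardι
      rintro (m | m)
      · exact Set.mem_insert_iff.mpr (Or.inr (hmem _))
      · rcases (by omega : (m:ℕ) = 0 ∨ (m:ℕ) = 1) with h | h
        · have : m = 0 := Fin.ext h
          subst this
          simp [hw]
          exact Set.mem_insert_iff.mpr (Or.inr (hmem _))
        · have : m = 1 := Fin.ext h
          subst this
          simp [hw]
    -- rep Q is in the span of the others
    have hspan : (w (Sum.inr 1)).rep ∈ Submodule.span k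
        ((fun m : ι => (w m).rep) '' (Set.univ \ {Sum.inr 1})) := by
      have hwQ : w (Sum.inr 1) = Q := by simp [hw]
      rw [hwQ]
      have hkey : Q.rep = q i • (P (Fin.last (r+1))).rep
          + ∑ l ∈ ({i,j}ᶜ : Finset (Fin (r+1))), (q l - q i) • B l := by
        rw [← hBsum, Finset.smul_sum, ← hrepr]
        have hext : ∑ l ∈ ({i,j}ᶜ : Finset (Fin (r+1))), (q l - q i) • B l
            = ∑ l : Fin (r+1), (q l - q i) • B l := by
          apply Finset.sum_subset (Finset.subset_univ _)
          intro x _ hx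
          simp only [Finset.mem_compl, not_not] at hx
          rcases Finset.mem_insert.mp hx with rfl | hx'
          · simp
          · rcases Finset.mem_singleton.mp hx' with rfl
            rw [← hqij, sub_self, zero_smul]
        rw [hext, ← Finset.sum_add_distrib]
        apply Finset.sum_congr rfl
        intro l _
        rw [← add_smul]
        congr 1
        ring
      rw [hkey]
      apply Submodule.add_mem
      · apply Submodule.smul_mem
        apply Submodule.subset_span
        refine ⟨Sum.inr 0, ⟨trivial, fun h => absurd (Sum.inr_injective h) (by decide)⟩, ?_⟩
        show (w (Sum.inr 0)).rep = _
        simp [hw]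
      · apply Submodule.sum_mem
        intro l hl
        obtain ⟨d, hd0, hdB⟩ := hB l
        rw [hdB, smul_smul]
        apply Submodule.smul_mem
        apply Submodule.subset_span
        refine ⟨Sum.inl ⟨l, hl⟩, ⟨trivial, by simp⟩, ?_⟩
        show (w (Sum.inl ⟨l, hl⟩)).rep = _
        simp [hw]
    exact hfam.notMem_span_image (by simp) hspan


end Aux

/-- For a set `S` of `r+2` points of `ℙ^r(k)` in linearly general position, a point
`Q ∉ S` lies on some rational normal curve containing `S` iff `S ∪ {Q}` is in linearly
general position; i.e., the union of all rational normal curves containing `S` equals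
`S ∪ {Q | S ∪ {Q} in linearly general position}`. -/
theorem statement_17 (k : Type*) [Field k] [IsAlgClosed k] [CharZero k]
    (r : ℕ) (hr : 3 ≤ r)
    (S : Finset (Projectivization k (Fin (r + 1) → k))) (hcard : S.card = r + 2)
    (hS : InLinGenPos k r ↑S) :
    (∀ Q : Projectivization k (Fin (r + 1) → k), Q ∉ (S : Set _) →
      ((∃ D : Set (Projectivization k (Fin (r + 1) → k)),
          IsRNC k r D ∧ ↑S ⊆ D ∧ Q ∈ D) ↔ InLinGenPos k r (insert Q ↑S))) ∧
    ⋃₀ {D : Set (Projectivization k (Fin (r + 1) → k)) | IsRNC k r D ∧ ↑S ⊆ D} =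
      ↑S ∪ {Q : Projectivization k (Fin (r + 1) → k) | InLinGenPos k r (insert Q ↑S)} := by
  classical
  have hr1 : 1 ≤ r := by omega
  -- enumerate the points of S
  set e : Fin (r+2) ≃ ↥S := (finCongr hcard.symm).trans S.equivFin.symm with he
  set P : Fin (r+2) → Projectivization k (Fin (r+1) → k) := fun m => (e m : _) with hP
  have hPinj : Function.Injective P := fun m n h => e.injective (Subtype.ext h)
  have hPmem : ∀ m, P m ∈ (S : Set _) := fun m => (e m).2
  have hPsurj : ∀ Q ∈ S, ∃ m, P m = Q := by
    intro Q hQ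
    exact ⟨e.symm ⟨Q, hQ⟩, by rw [hP]; simp⟩
  -- the adapted basis
  obtain ⟨B, hB, hBsum⟩ := frameBasis hS P hPinj hPmem
  -- helper: mk of a nonzero multiple
  have mk_eq_of_eq : ∀ (v w : Fin (r+1) → k) (hv : v ≠ 0) (hw : w ≠ 0), v = w →
      Projectivization.mk k v hv = Projectivization.mk k w hw := by
    intro v w hv hw hvw
    subst hvw
    rfl
  have mk_smul : ∀ (v : Fin (r+1) → k) (hv : v ≠ 0) (d : k) (hd : d ≠ 0)
      (hdv : d • v ≠ 0), Projectivization.mk k (d • v) hdv = Projectivization.mk k v hv := by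
    intro v hv d hd hdv
    rw [Projectivization.mk_eq_mk_iff]
    exact ⟨Units.mk0 d hd, rfl⟩
  -- generic construction of an RNC through S
  have construct : ∀ (t : Fin (r+1) → k), Function.Injective t →
      ∃ g : (Fin (r+1) → k) ≃ₗ[k] (Fin (r+1) → k),
        (↑S ⊆ Projectivization.map (g : (Fin (r+1) → k) →ₗ[k] (Fin (r+1) → k))
          g.injective '' stdRNC k r) ∧
        g (sv r (1:k) 0) = ∑ i, (∏ l ∈ Finset.univ.erase i, (0 - t l)) • B i := by
    intro t ht
    obtain ⟨g, h1, h2, h3⟩ := curveExists B t ht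
    refine ⟨g, ?_, h3⟩
    intro x hx
    obtain ⟨m, rfl⟩ := hPsurj x hx
    rcases Fin.eq_castSucc_or_eq_last m with ⟨i, rfl⟩ | rfl
    · obtain ⟨d, hd0, hgd⟩ := h1 i
      obtain ⟨d', hd'0, hB'⟩ := hB i
      have hne : sv r (1:k) (t i) ≠ 0 := sv_ne_zero (Or.inl one_ne_zero)
      refine ⟨Projectivization.mk k (sv r (1:k) (t i)) hne, ⟨1, t i, hne, rfl⟩, ?_⟩
      rw [Projectivization.map_mk]
      have hgd2 : g (sv r (1:k) (t i)) = (d * d') • (P i.castSucc).rep := by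
        rw [hgd, hB', smul_smul]
      have hrep_ne : (P i.castSucc).rep ≠ 0 := Projectivization.rep_nonzero _
      have : Projectivization.mk k (g (sv r (1:k) (t i)))
          (fun hz => hne (g.map_eq_zero_iff.mp hz)) = P i.castSucc := by
        have hdd' : d * d' ≠ 0 := mul_ne_zero hd0 hd'0
        have hsm : (d * d') • (P i.castSucc).rep ≠ 0 := smul_ne_zero hdd' hrep_ne
        calc Projectivization.mk k (g (sv r (1:k) (t i))) _
            = Projectivization.mk k ((d * d') • (P i.castSucc).rep) hsm :=
              mk_eq_of_eq _ _ _ _ hgd2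
          _ = Projectivization.mk k (P i.castSucc).rep hrep_ne := mk_smul _ _ _ hdd' hsm
          _ = P i.castSucc := Projectivization.mk_rep _
      exact this
    · have hne : sv r (0:k) 1 ≠ 0 := sv_ne_zero (Or.inr one_ne_zero)
      refine ⟨Projectivization.mk k (sv r (0:k) 1) hne, ⟨0, 1, hne, rfl⟩, ?_⟩
      rw [Projectivization.map_mk]
      have hrep_ne : (P (Fin.last (r+1))).rep ≠ 0 := Projectivization.rep_nonzero _
      have hg2 : g (sv r (0:k) 1) = (P (Fin.last (r+1))).rep := by rw [h2, hBsum]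
      calc Projectivization.mk k (g (sv r (0:k) 1)) _
          = Projectivization.mk k (P (Fin.last (r+1))).rep hrep_ne :=
            mk_eq_of_eq _ _ _ _ hg2
        _ = P (Fin.last (r+1)) := Projectivization.mk_rep _
  -- part 1
  have part1 : ∀ Q : Projectivization k (Fin (r + 1) → k), Q ∉ (S : Set _) →
      ((∃ D : Set (Projectivization k (Fin (r + 1) → k)),
          IsRNC k r D ∧ ↑S ⊆ D ∧ Q ∈ D) ↔ InLinGenPos k r (insert Q ↑S)) := by
    intro Q hQ
    constructor
    · rintro ⟨D, hD, hSD, hQD⟩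
      intro T hT hTc
      apply rnc_li hr1 hD T ?_ hTc
      intro x hx
      rcases hT hx with h | h
      · exact h ▸ hQD
      · exact hSD h
    · intro hlgp
      obtain ⟨hq0, hqne⟩ := qCond P hPinj hPmem B hB hBsum Q hQ hlgp
      set q : Fin (r+1) → k := fun i => B.repr Q.rep i with hqdef
      set t : Fin (r+1) → k := fun i => -(q i)⁻¹ with ht
      have htinj : Function.Injective t := by
        intro i j hij
        rw [ht] at hij
        simp only [neg_inj] at hij
        have := inv_injective hij
        by_contra hne
        exact hqne i j hne this
      obtain ⟨g, hSD, hg3⟩ := construct t htinj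
      refine ⟨_, ⟨g, rfl⟩, hSD, ?_⟩
      -- Q is the image of the point [1:0]
      have hne : sv r (1:k) 0 ≠ 0 := sv_ne_zero (Or.inl one_ne_zero)
      refine ⟨Projectivization.mk k (sv r (1:k) 0) hne, ⟨1, 0, hne, rfl⟩, ?_⟩
      rw [Projectivization.map_mk]
      set κ : k := ∏ l, (q l)⁻¹ with hκ
      have hκ0 : κ ≠ 0 := Finset.prod_ne_zero_iff.mpr (fun l _ => inv_ne_zero (hq0 l))
      have hprod : ∀ i, (∏ l ∈ Finset.univ.erase i, (0 - t l)) = κ * q i := by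
        intro i
        have h1 : ∀ l, (0 : k) - t l = (q l)⁻¹ := by
          intro l; rw [ht]; ring
        simp only [h1]
        have h2 := Finset.prod_erase_mul Finset.univ (fun l => (q l)⁻¹) (Finset.mem_univ i)
        rw [hκ]
        calc ∏ l ∈ Finset.univ.erase i, (q l)⁻¹
            = (∏ l ∈ Finset.univ.erase i, (q l)⁻¹) * ((q i)⁻¹ * q i) := by
              rw [inv_mul_cancel₀ (hq0 i), mul_one]
          _ = ((∏ l ∈ Finset.univ.erase i, (q l)⁻¹) * (q i)⁻¹) * q i := by ring
          _ = (∏ l, (q l)⁻¹) * q i := by rw [h2]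
      have hgQ : g (sv r (1:k) 0) = κ • Q.rep := by
        rw [hg3]
        have : ∀ i, (∏ l ∈ Finset.univ.erase i, (0 - t l)) • B i = κ • (q i • B i) := by
          intro i
          rw [hprod i, mul_smul]
        rw [Finset.sum_congr rfl (fun i _ => this i), ← Finset.smul_sum, B.sum_repr]
      have hrep_ne : Q.rep ≠ 0 := Projectivization.rep_nonzero _
      have hsm : κ • Q.rep ≠ 0 := smul_ne_zero hκ0 hrep_ne
      calc Projectivization.mk k (g (sv r (1:k) 0)) _
          = Projectivization.mk k (κ • Q.rep) hsm :=
            mk_eq_of_eq _ _ _ _ hgQ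
        _ = Projectivization.mk k Q.rep hrep_ne := mk_smul _ _ _ hκ0 hsm
        _ = Q := Projectivization.mk_rep _
  refine ⟨part1, ?_⟩
  -- part 2
  have hexist : ∃ D, IsRNC k r D ∧ ↑S ⊆ D := by
    have htinj : Function.Injective (fun i : Fin (r+1) => ((i : ℕ) : k)) := by
      intro i j hij
      exact Fin.ext (Nat.cast_injective hij)
    obtain ⟨g, hSD, _⟩ := construct _ htinj
    exact ⟨_, ⟨g, rfl⟩, hSD⟩
  ext x
  simp only [Set.mem_sUnion, Set.mem_setOf_eq, Set.mem_union]
  constructor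
  · rintro ⟨D, ⟨hD, hSD⟩, hxD⟩
    by_cases hx : x ∈ (S : Set _)
    · exact Or.inl hx
    · exact Or.inr ((part1 x hx).mp ⟨D, hD, hSD, hxD⟩)
  · rintro (hx | hx)
    · obtain ⟨D, hD, hSD⟩ := hexist
      exact ⟨D, ⟨hD, hSD⟩, hSD hx⟩
    · by_cases hxS : x ∈ (S : Set _)
      · obtain ⟨D, hD, hSD⟩ := hexist
        exact ⟨D, ⟨hD, hSD⟩, hSD hxS⟩
      · obtain ⟨D, hD, hSD, hxD⟩ := (part1 x hxS).mpr hx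
        exact ⟨D, ⟨hD, hSD⟩, hxD⟩
end
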